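/- arXiv:1812.05090 — 4 statements merged into one kernel-verified Lean document; each statement's English description precedes it below -/
import Mathlib

section
/- For all integers n, t ≥ 1 and all θ, φ, h ∈ ℝ, every eigenvalue λ of the transfer matrix T_{θ,φ}[h] satisfies |λ| ≤ (1 + |cos θ|)^n. -/
noncomputable section
open Complex Matrix Finset
open scoped Kronecker

abbrev QOp (ι : Type) := Matrix (ι → Fin 2) (ι → Fin 2) ℂ

def pauliX : Matrix (Fin 2) (Fin 2) ℂ := !![0, 1; 1, 0]
def pauliY : Matrix (Fin 2) (Fin 2) ℂ := !![0, -Complex.I; Complex.I, 0]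
def pauliZ : Matrix (Fin 2) (Fin 2) ℂ := !![1, 0; 0, -1]

def site {ι : Type} [DecidableEq ι] [Fintype ι] (M : Matrix (Fin 2) (Fin 2) ℂ) (j : ι) :
    QOp ι :=
  Matrix.of fun x y => ∏ k, if k = j then M (x k) (y k) else if x k = y k then (1 : ℂ) else 0

abbrev mexp {ι : Type} [DecidableEq ι] [Fintype ι] (A : QOp ι) : QOp ι :=
  NormedSpace.exp A

/-- Spin configurations of the chain with sites `(ν,τ)`, `ν ∈ {1,…,n}`, `τ ∈ {1,…,t}`. -/
abbrev HIdx (n t : ℕ) := (Fin n × Fin t) → Fin 2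

/-- Operators on the doubled space `H ⊗ H`. -/
abbrev DOp (n t : ℕ) := Matrix (HIdx n t × HIdx n t) (HIdx n t × HIdx n t) ℂ

/-- `M^a_ν = Σ_τ σ^a_{ν,τ}`. -/
def Msum (n t : ℕ) (M : Matrix (Fin 2) (Fin 2) ℂ) (ν : Fin n) : QOp (Fin n × Fin t) :=
  ∑ τ : Fin t, site M (ν, τ)

/-- `U_{ν,φ} = exp(−i(π/4)Σ_{τ=1}^{t−1} σ^z_{ν,τ}σ^z_{ν,τ+1} − i(φ/2)σ^z_{ν,1})`. -/
def Uop (n t : ℕ) (ht : 0 < t) (ν : Fin n) (φ : ℝ) : QOp (Fin n × Fin t) :=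
  mexp ((-Complex.I) • (((Real.pi / 4 : ℝ) : ℂ) •
      ∑ τ : Fin t, (if h2 : (τ : ℕ) + 1 < t then
        site pauliZ (ν, τ) * site pauliZ (ν, ⟨(τ : ℕ) + 1, h2⟩) else 0)
    + ((φ / 2 : ℝ) : ℂ) • site pauliZ (ν, ⟨0, ht⟩)))

/-- `V_ν(φ,h) = U_{ν,φ}·exp(−ih M^z_ν)·exp(i(π/4)M^x_ν)`. -/
def Vop (n t : ℕ) (ht : 0 < t) (ν : Fin n) (φ h : ℝ) : QOp (Fin n × Fin t) :=
  Uop n t ht ν φ * mexp ((-Complex.I) • (((h : ℝ) : ℂ) • Msum n t pauliZ ν)) *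
    mexp (Complex.I • (((Real.pi / 4 : ℝ) : ℂ) • Msum n t pauliX ν))

/-- `G^a_{ν,τ} = ½(1⊗1 + σ^a_{ν,τ} ⊗ σ^a_{ν,τ})` on the doubled space. -/
def Gop (n t : ℕ) (M : Matrix (Fin 2) (Fin 2) ℂ) (p : Fin n × Fin t) : DOp n t :=
  (1 / 2 : ℂ) • (1 + site M p ⊗ₖ site M p)

/-- `B^z_{ν,1}[θ]`. -/
def Bop (n t : ℕ) (ht : 0 < t) (ν : Fin n) (θ : ℝ) : DOp n t :=
  let K : QOp (Fin n × Fin t) :=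
    ((Real.cos (θ / 2) : ℝ) : ℂ) • ((1 / 2 : ℂ) • (1 + site pauliZ (ν, ⟨0, ht⟩))) +
      ((Real.sin (θ / 2) : ℝ) : ℂ) • ((1 / 2 : ℂ) • (1 - site pauliZ (ν, ⟨0, ht⟩)))
  (2 : ℂ) • (K ⊗ₖ K)

/-- `𝕌^{(ν)}_φ[h] = V_ν(φ,h) ⊗ V_ν(φ,h)^*`. -/
def UUop (n t : ℕ) (ht : 0 < t) (ν : Fin n) (φ h : ℝ) : DOp n t :=
  Vop n t ht ν φ h ⊗ₖ (Vop n t ht ν φ h).map (starRingEnd ℂ)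

/-- The transfer matrix `T_{θ,φ}[h] = ∏_ν B^z_{ν,1}[θ]·G^z_{ν,t}·𝕌^{(ν)}_φ[h]`. -/
def Tmat (n t : ℕ) (ht : 0 < t) (θ φ h : ℝ) : DOp n t :=
  (List.ofFn (fun ν : Fin n =>
    Bop n t ht ν θ * Gop n t pauliZ (ν, ⟨t - 1, by omega⟩) * UUop n t ht ν φ h)).prod

/-- The transfer matrix at `θ = π/2`: `T_{π/2,φ}[h] = ∏_ν G^z_{ν,t}·𝕌^{(ν)}_φ[h]`. -/
def TmatHalf (n t : ℕ) (ht : 0 < t) (φ h : ℝ) : DOp n t :=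
  (List.ofFn (fun ν : Fin n =>
    Gop n t pauliZ (ν, ⟨t - 1, by omega⟩) * UUop n t ht ν φ h)).prod

/-- The maximally entangled vector `|𝟙⟩ = 2^{−nt/2} Σ_s |s⟩⊗|s⟩`. -/
def oneVec (n t : ℕ) : HIdx n t × HIdx n t → ℂ :=
  fun p => if p.1 = p.2 then (((Real.sqrt 2 ^ (n * t) : ℝ) : ℂ))⁻¹ else 0

/-- Matrix of the permutation of tensor factors sending `(ν,τ)` to `(ν−1 mod n, τ)`. -/
def permMat (n t : ℕ) : Matrix (HIdx n t) (HIdx n t) ℂ :=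
  Matrix.of fun r s => if (∀ p : Fin n × Fin t, r p = s (finRotate n p.1, p.2)) then 1 else 0

/-- `P` : identity on the first factor, cyclic shift of the `n` copies on the second. -/
def Pop (n t : ℕ) : DOp n t :=
  (1 : Matrix (HIdx n t) (HIdx n t) ℂ) ⊗ₖ permMat n t

/-- `|Ψ⟩ = P†|𝟙⟩`. -/
def PsiVec (n t : ℕ) : HIdx n t × HIdx n t → ℂ :=
  (Pop n t)ᴴ.mulVec (oneVec n t)

section Aux
open scoped Matrix.Norms.L2Operator

set_option linter.unusedSectionVars false

variable {ι : Type} [DecidableEq ι] [Fintype ι]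

/-- Tensor product of one-site operators. -/
def kron (f : ι → Matrix (Fin 2) (Fin 2) ℂ) : QOp ι :=
  Matrix.of fun x y => ∏ k, f k (x k) (y k)

lemma site_eq_kron (M : Matrix (Fin 2) (Fin 2) ℂ) (j : ι) :
    site M j = kron (fun k => if k = j then M else 1) := by
  ext x y
  simp only [site, kron, Matrix.of_apply]
  refine Finset.prod_congr rfl fun k _ => ?_
  by_cases h : k = j <;> simp [h, Matrix.one_apply]

lemma kron_mul (f g : ι → Matrix (Fin 2) (Fin 2) ℂ) :
    kron f * kron g = kron (fun k => f k * g k) := by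
  ext x y
  simp only [kron, Matrix.mul_apply, Matrix.of_apply]
  rw [show (∏ k, ∑ a : Fin 2, f k (x k) a * g k a (y k)) =
      ∑ z ∈ Fintype.piFinset (fun _ : ι => (Finset.univ : Finset (Fin 2))),
        ∏ k, f k (x k) (z k) * g k (z k) (y k) from
    Finset.prod_univ_sum _ _]
  simp [Fintype.piFinset_univ, Finset.prod_mul_distrib]

lemma kron_one : kron (fun _ : ι => (1 : Matrix (Fin 2) (Fin 2) ℂ)) = 1 := by
  ext x y
  simp only [kron, Matrix.of_apply, Matrix.one_apply, funext_iff]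
  simp [Finset.prod_boole]

lemma kron_conjTranspose (f : ι → Matrix (Fin 2) (Fin 2) ℂ) :
    (kron f)ᴴ = kron (fun k => (f k)ᴴ) := by
  ext x y
  simp [kron, Matrix.conjTranspose_apply, map_prod]

lemma site_mul_site_same (M N : Matrix (Fin 2) (Fin 2) ℂ) (j : ι) :
    site M j * site N j = site (M * N) j := by
  rw [site_eq_kron, site_eq_kron, kron_mul, site_eq_kron]
  have : (fun k : ι => (if k = j then M else 1) * (if k = j then N else 1)) =
      fun k : ι => if k = j then M * N else 1 := by
    funext k; by_cases h : k = j <;> simp [h]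
  rw [this]

lemma site_one (j : ι) : site (1 : Matrix (Fin 2) (Fin 2) ℂ) j = 1 := by
  rw [site_eq_kron]
  rw [show (fun k : ι => if k = j then (1 : Matrix (Fin 2) (Fin 2) ℂ) else 1) =
      fun _ => (1 : Matrix (Fin 2) (Fin 2) ℂ) from funext fun k => by simp]
  exact kron_one

lemma site_conjTranspose (M : Matrix (Fin 2) (Fin 2) ℂ) (j : ι) :
    (site M j)ᴴ = site Mᴴ j := by
  rw [site_eq_kron, kron_conjTranspose, site_eq_kron]
  have : (fun k : ι => (if k = j then M else 1)ᴴ) =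
      fun k : ι => if k = j then Mᴴ else 1 := by
    funext k; by_cases h : k = j <;> simp [h]
  rw [this]

lemma site_mul_comm (M N : Matrix (Fin 2) (Fin 2) ℂ) {a b : ι} (hab : a ≠ b) :
    site M a * site N b = site N b * site M a := by
  rw [site_eq_kron M, site_eq_kron N, kron_mul, kron_mul]
  have : (fun k : ι => (if k = a then M else 1) * (if k = b then N else 1)) =
      fun k : ι => (if k = b then N else 1) * (if k = a then M else 1) := by
    funext k
    by_cases h1 : k = a
    · subst h1; simp [if_neg hab]
    · by_cases h2 : k = b
      · subst h2; simp [if_neg (Ne.symm hab)]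
      · simp [h1, h2]
  rw [this]

lemma site_apply' (M : Matrix (Fin 2) (Fin 2) ℂ) (j : ι) (x y : ι → Fin 2) :
    site M j x y = M (x j) (y j) *
      ∏ k ∈ Finset.univ.erase j, (if x k = y k then (1:ℂ) else 0) := by
  simp only [site, Matrix.of_apply]
  rw [← Finset.mul_prod_erase _ _ (Finset.mem_univ j), if_pos rfl]
  congr 1
  exact Finset.prod_congr rfl fun k hk => if_neg (Finset.ne_of_mem_erase hk)

lemma site_add (M N : Matrix (Fin 2) (Fin 2) ℂ) (j : ι) :
    site (M + N) j = site M j + site N j := by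
  ext x y
  simp [site_apply', add_mul]

lemma site_smul (c : ℂ) (M : Matrix (Fin 2) (Fin 2) ℂ) (j : ι) :
    site (c • M) j = c • site M j := by
  ext x y
  simp [site_apply', mul_assoc]

lemma site_diagonal (d : Fin 2 → ℂ) (j : ι) :
    site (Matrix.diagonal d) j = Matrix.diagonal (fun x : ι → Fin 2 => d (x j)) := by
  ext x y
  rw [site_apply']
  by_cases hxy : x = y
  · subst hxy
    simp [Matrix.diagonal_apply_eq]
  · obtain ⟨k, hk⟩ : ∃ k, x k ≠ y k := by
      by_contra hc
      push_neg at hc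
      exact hxy (funext hc)
    rw [Matrix.diagonal_apply_ne _ hxy]
    by_cases hkj : k = j
    · subst hkj
      rw [Matrix.diagonal_apply_ne _ hk, zero_mul]
    · rw [Finset.prod_eq_zero (Finset.mem_erase.2 ⟨hkj, Finset.mem_univ k⟩)
        (by rw [if_neg hk]), mul_zero]

end Aux

section Aux2

set_option linter.unusedSectionVars false

variable {ι : Type} [DecidableEq ι] [Fintype ι]

lemma pauliZ_herm : pauliZᴴ = pauliZ := by
  ext i j
  fin_cases i <;> fin_cases j <;>
    simp [pauliZ, Matrix.conjTranspose_apply]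

lemma pauliX_herm : pauliXᴴ = pauliX := by
  ext i j
  fin_cases i <;> fin_cases j <;>
    simp [pauliX, Matrix.conjTranspose_apply]

lemma pauliZ_mul_self : pauliZ * pauliZ = 1 := by
  ext i j
  fin_cases i <;> fin_cases j <;>
    simp [pauliZ, Matrix.mul_apply, Fin.sum_univ_two, Matrix.one_apply]

lemma mexp_skew (A : QOp ι) (hA : Aᴴ = -A) : (mexp A)ᴴ * mexp A = 1 := by
  have h1 : (mexp A)ᴴ = mexp Aᴴ := (Matrix.exp_conjTranspose A).symm
  have h2 : mexp (-A + A) = mexp (-A) * mexp A :=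
    Matrix.exp_add_of_commute (-A) A ((Commute.refl A).neg_left)
  have h3 : mexp (0 : QOp ι) = 1 := NormedSpace.exp_zero
  rw [h1, hA, ← h2, neg_add_cancel, h3]

lemma unitary_mul {A B : QOp ι} (hA : Aᴴ * A = 1) (hB : Bᴴ * B = 1) :
    (A * B)ᴴ * (A * B) = 1 := by
  rw [Matrix.conjTranspose_mul, mul_assoc, ← mul_assoc Aᴴ, hA, one_mul, hB]

lemma herm_smul_real (r : ℝ) {A : QOp ι} (hA : Aᴴ = A) :
    (((r : ℂ)) • A)ᴴ = (r : ℂ) • A := by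
  rw [Matrix.conjTranspose_smul, hA]
  norm_num

lemma Vop_unitary (n t : ℕ) (ht : 0 < t) (ν : Fin n) (φ h : ℝ) :
    (Vop n t ht ν φ h)ᴴ * Vop n t ht ν φ h = 1 := by
  have hsiteZ : ∀ p : Fin n × Fin t, (site pauliZ p)ᴴ = site pauliZ p := fun p => by
    rw [site_conjTranspose, pauliZ_herm]
  have hsiteX : ∀ p : Fin n × Fin t, (site pauliX p)ᴴ = site pauliX p := fun p => by
    rw [site_conjTranspose, pauliX_herm]
  have hMZ : (Msum n t pauliZ ν)ᴴ = Msum n t pauliZ ν := by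
    unfold Msum
    rw [Matrix.conjTranspose_sum]
    exact Finset.sum_congr rfl fun τ _ => hsiteZ _
  have hMX : (Msum n t pauliX ν)ᴴ = Msum n t pauliX ν := by
    unfold Msum
    rw [Matrix.conjTranspose_sum]
    exact Finset.sum_congr rfl fun τ _ => hsiteX _
  refine unitary_mul (unitary_mul ?_ ?_) ?_
  · -- Uop
    refine mexp_skew _ ?_
    rw [Matrix.conjTranspose_smul]
    have : (((Real.pi / 4 : ℝ) : ℂ) •
        ∑ τ : Fin t, (if h2 : (τ : ℕ) + 1 < t then
          site pauliZ (ν, τ) * site pauliZ (ν, ⟨(τ : ℕ) + 1, h2⟩) else 0)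
      + ((φ / 2 : ℝ) : ℂ) • site pauliZ (ν, (⟨0, ht⟩ : Fin t)))ᴴ
        = (((Real.pi / 4 : ℝ) : ℂ) •
        ∑ τ : Fin t, (if h2 : (τ : ℕ) + 1 < t then
          site pauliZ (ν, τ) * site pauliZ (ν, ⟨(τ : ℕ) + 1, h2⟩) else 0)
      + ((φ / 2 : ℝ) : ℂ) • site pauliZ (ν, (⟨0, ht⟩ : Fin t))) := by
      rw [Matrix.conjTranspose_add]
      congr 1
      · refine herm_smul_real _ ?_
        rw [Matrix.conjTranspose_sum]
        refine Finset.sum_congr rfl fun τ _ => ?_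
        by_cases h2 : (τ : ℕ) + 1 < t
        · simp only [dif_pos h2]
          rw [Matrix.conjTranspose_mul, hsiteZ, hsiteZ]
          refine (site_mul_comm _ _ ?_).symm
          intro hc
          have := congrArg (fun p : Fin n × Fin t => (p.2 : ℕ)) hc
          simp at this
        · simp [dif_neg h2]
      · exact herm_smul_real _ (hsiteZ _)
    rw [this]
    simp only [star_neg, Complex.star_def, Complex.conj_I, neg_smul, neg_neg]
  · refine mexp_skew _ ?_
    rw [Matrix.conjTranspose_smul, herm_smul_real _ hMZ]
    simp
  · refine mexp_skew _ ?_
    rw [Matrix.conjTranspose_smul, herm_smul_real _ hMX]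
    simp

end Aux2

section Aux3
open scoped Matrix.Norms.L2Operator

set_option linter.unusedSectionVars false

variable {m' : Type} [DecidableEq m'] [Fintype m']

lemma kronecker_conjT {l' : Type} [DecidableEq l'] [Fintype l']
    (A : Matrix m' m' ℂ) (B : Matrix l' l' ℂ) : (A ⊗ₖ B)ᴴ = Aᴴ ⊗ₖ Bᴴ := by
  ext x y
  simp [Matrix.conjTranspose_apply, Matrix.kroneckerMap_apply]

lemma norm_one_le : ‖(1 : Matrix m' m' ℂ)‖ ≤ 1 := by
  have h := Matrix.l2_opNorm_conjTranspose_mul_self (1 : Matrix m' m' ℂ)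
  rw [Matrix.conjTranspose_one, one_mul] at h
  nlinarith [norm_nonneg (1 : Matrix m' m' ℂ)]

lemma norm_le_one_of_unitary {A : Matrix m' m' ℂ} (hA : Aᴴ * A = 1) : ‖A‖ ≤ 1 := by
  have h1 : ‖A‖ * ‖A‖ = ‖(1 : Matrix m' m' ℂ)‖ := by
    rw [← hA, Matrix.l2_opNorm_conjTranspose_mul_self]
  have h2 := norm_one_le (m' := m')
  nlinarith [norm_nonneg A]

lemma norm_le_one_of_proj {A : Matrix m' m' ℂ} (h1 : Aᴴ = A) (h2 : A * A = A) :
    ‖A‖ ≤ 1 := by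
  have h3 := Matrix.l2_opNorm_conjTranspose_mul_self A
  rw [h1, h2] at h3
  nlinarith [norm_nonneg A]

lemma l2_opNorm_diagonal_le (d : m' → ℂ) (c : ℝ) (hc : 0 ≤ c)
    (hd : ∀ i, ‖d i‖ ≤ c) : ‖Matrix.diagonal d‖ ≤ c := by
  rw [Matrix.l2_opNorm_def]
  refine ContinuousLinearMap.opNorm_le_bound _ hc fun x => ?_
  have hx : ∀ i, (Matrix.toEuclideanLin.trans LinearMap.toContinuousLinearMap
      (Matrix.diagonal d) x) i = d i * x i := by
    intro i
    simp only [LinearEquiv.trans_apply, LinearMap.coe_toContinuousLinearMap',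
      Matrix.toEuclideanLin_apply]
    simp [Matrix.mulVec_diagonal]
  rw [EuclideanSpace.norm_eq, EuclideanSpace.norm_eq, ← Real.sqrt_sq hc,
    ← Real.sqrt_mul (by positivity)]
  apply Real.sqrt_le_sqrt
  rw [Finset.mul_sum]
  refine Finset.sum_le_sum fun i _ => ?_
  rw [hx i]
  have h1 : ‖d i * x i‖ = ‖d i‖ * ‖x i‖ := by
    rw [norm_mul]
  rw [h1, mul_pow]
  have h2 : ‖d i‖ ^ 2 ≤ c ^ 2 := by
    have := hd i
    nlinarith [norm_nonneg (d i)]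
  nlinarith [sq_nonneg (‖x i‖), norm_nonneg (x i)]

lemma norm_list_prod_le (c : ℝ) :
    ∀ l : List (Matrix m' m' ℂ), (∀ A ∈ l, ‖A‖ ≤ c) → ‖l.prod‖ ≤ c ^ l.length := by
  intro l
  induction l with
  | nil => intro _; simpa using norm_one_le (m' := m')
  | cons a l ih =>
    intro hmem
    have ha : ‖a‖ ≤ c := hmem a List.mem_cons_self
    have hc : 0 ≤ c := le_trans (norm_nonneg a) ha
    have hl := ih fun A hA => hmem A (List.mem_cons_of_mem a hA)
    rw [List.prod_cons, List.length_cons, pow_succ']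
    calc ‖a * l.prod‖ ≤ ‖a‖ * ‖l.prod‖ := Matrix.l2_opNorm_mul a l.prod
      _ ≤ c * c ^ l.length := by
          exact mul_le_mul ha hl (norm_nonneg _) hc

end Aux3

section Aux4
open scoped Matrix.Norms.L2Operator

set_option linter.unusedSectionVars false

variable {ι : Type} [DecidableEq ι] [Fintype ι]

lemma site_sub (M N : Matrix (Fin 2) (Fin 2) ℂ) (j : ι) :
    site (M - N) j = site M j - site N j := by
  ext x y
  simp [site_apply', sub_mul]

lemma UUop_unitary (n t : ℕ) (ht : 0 < t) (ν : Fin n) (φ h : ℝ) :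
    (UUop n t ht ν φ h)ᴴ * UUop n t ht ν φ h = 1 := by
  have hU := Vop_unitary n t ht ν φ h
  unfold UUop
  rw [kronecker_conjT, ← Matrix.mul_kronecker_mul]
  have h1 : ((Vop n t ht ν φ h).map (starRingEnd ℂ))ᴴ =
      (Vop n t ht ν φ h)ᴴ.map (starRingEnd ℂ) := by
    ext x y
    simp [Matrix.conjTranspose_apply, Matrix.map_apply]
  rw [h1, ← Matrix.map_mul, hU,
    Matrix.map_one _ (map_zero _) (map_one _), Matrix.one_kronecker_one]

lemma UUop_norm_le (n t : ℕ) (ht : 0 < t) (ν : Fin n) (φ h : ℝ) :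
    ‖UUop n t ht ν φ h‖ ≤ 1 :=
  norm_le_one_of_unitary (UUop_unitary n t ht ν φ h)

lemma Gop_norm_le (n t : ℕ) (p : Fin n × Fin t) : ‖Gop n t pauliZ p‖ ≤ 1 := by
  set S : DOp n t := site pauliZ p ⊗ₖ site pauliZ p with hSdef
  have hS : Sᴴ = S := by
    rw [hSdef, kronecker_conjT, site_conjTranspose, pauliZ_herm]
  have hS2 : S * S = 1 := by
    rw [hSdef, ← Matrix.mul_kronecker_mul, site_mul_site_same, pauliZ_mul_self,
      site_one, Matrix.one_kronecker_one]
  refine norm_le_one_of_proj ?_ ?_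
  · unfold Gop
    rw [Matrix.conjTranspose_smul, Matrix.conjTranspose_add, Matrix.conjTranspose_one, hS]
    norm_num
    exact hSdef
  · show ((1 / 2 : ℂ) • (1 + S)) * ((1 / 2 : ℂ) • (1 + S)) = (1 / 2 : ℂ) • (1 + S)
    have hX : (1 + S) * (1 + S) = (2 : ℂ) • (1 + S) := by
      rw [mul_add, mul_one, add_mul, one_mul, hS2, two_smul]
      abel
    rw [smul_mul_smul_comm, hX, smul_smul]
    norm_num

/-- Diagonal entries of the boundary matrix. -/
def dval (θ : ℝ) : Fin 2 → ℝ := ![Real.cos (θ / 2), Real.sin (θ / 2)]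

lemma dval_bound (θ : ℝ) (i j : Fin 2) :
    ‖(2 * (((dval θ i : ℝ) : ℂ) * ((dval θ j : ℝ) : ℂ)))‖ ≤ 1 + |Real.cos θ| := by
  have habs : ‖(2 * (((dval θ i : ℝ) : ℂ) * ((dval θ j : ℝ) : ℂ)))‖
      = 2 * (|dval θ i| * |dval θ j|) := by
    rw [norm_mul, norm_mul, Complex.norm_real, Complex.norm_real,
      Real.norm_eq_abs, Real.norm_eq_abs]
    norm_num
  rw [habs]
  have hpy := Real.sin_sq_add_cos_sq (θ / 2)
  have hcos : Real.cos θ = 2 * Real.cos (θ / 2) ^ 2 - 1 := by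
    have h := Real.cos_two_mul (θ / 2)
    rw [show 2 * (θ / 2) = θ by ring] at h
    exact h
  fin_cases i <;> fin_cases j <;> simp [dval]
  · nlinarith [le_abs_self (Real.cos θ), abs_mul_abs_self (Real.cos (θ / 2))]
  · nlinarith [sq_nonneg (|Real.cos (θ / 2)| - |Real.sin (θ / 2)|),
      abs_mul_abs_self (Real.cos (θ / 2)), abs_mul_abs_self (Real.sin (θ / 2)),
      abs_nonneg (Real.cos θ)]
  · nlinarith [sq_nonneg (|Real.cos (θ / 2)| - |Real.sin (θ / 2)|),
      abs_mul_abs_self (Real.cos (θ / 2)), abs_mul_abs_self (Real.sin (θ / 2)),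
      abs_nonneg (Real.cos θ)]
  · nlinarith [neg_abs_le (Real.cos θ), abs_mul_abs_self (Real.sin (θ / 2))]

lemma Bop_eq_diagonal (n t : ℕ) (ht : 0 < t) (ν : Fin n) (θ : ℝ) :
    Bop n t ht ν θ = Matrix.diagonal (fun q : HIdx n t × HIdx n t =>
      2 * (((dval θ (q.1 (ν, ⟨0, ht⟩)) : ℝ) : ℂ) * ((dval θ (q.2 (ν, ⟨0, ht⟩)) : ℝ) : ℂ))) := by
  unfold Bop
  have hK : ((Real.cos (θ / 2) : ℝ) : ℂ) • ((1 / 2 : ℂ) • (1 + site pauliZ ((ν, ⟨0, ht⟩) : Fin n × Fin t))) +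
      ((Real.sin (θ / 2) : ℝ) : ℂ) • ((1 / 2 : ℂ) • (1 - site pauliZ ((ν, ⟨0, ht⟩) : Fin n × Fin t)))
      = site (Matrix.diagonal (fun i => ((dval θ i : ℝ) : ℂ))) ((ν, ⟨0, ht⟩) : Fin n × Fin t) := by
    have e1 : (1 : QOp (Fin n × Fin t)) + site pauliZ ((ν, ⟨0, ht⟩) : Fin n × Fin t)
        = site (1 + pauliZ) ((ν, ⟨0, ht⟩) : Fin n × Fin t) := by
      rw [site_add, site_one]
    have e2 : (1 : QOp (Fin n × Fin t)) - site pauliZ ((ν, ⟨0, ht⟩) : Fin n × Fin t)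
        = site (1 - pauliZ) ((ν, ⟨0, ht⟩) : Fin n × Fin t) := by
      rw [site_sub, site_one]
    have e3 : ((Real.cos (θ / 2) : ℝ) : ℂ) • ((1 / 2 : ℂ) • (1 + pauliZ)) +
        ((Real.sin (θ / 2) : ℝ) : ℂ) • ((1 / 2 : ℂ) • (1 - pauliZ))
        = Matrix.diagonal (fun i => ((dval θ i : ℝ) : ℂ)) := by
      ext i j
      fin_cases i <;> fin_cases j <;>
        simp [pauliZ, dval, Matrix.one_fin_two, Matrix.diagonal] <;> norm_num
    rw [e1, e2, ← site_smul, ← site_smul, ← site_smul, ← site_smul, ← site_add, e3]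
  rw [hK, site_diagonal]
  simp only [Matrix.diagonal_kronecker_diagonal, ← Matrix.diagonal_smul]
  congr 1

lemma Bop_norm_le (n t : ℕ) (ht : 0 < t) (ν : Fin n) (θ : ℝ) :
    ‖Bop n t ht ν θ‖ ≤ 1 + |Real.cos θ| := by
  rw [Bop_eq_diagonal]
  exact l2_opNorm_diagonal_le _ _ (by positivity) fun q => dval_bound θ _ _

end Aux4

section Aux5
open scoped Matrix.Norms.L2Operator

lemma factor_norm_le (n t : ℕ) (ht : 0 < t) (ν : Fin n) (θ φ h : ℝ) (τ : Fin t) :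
    ‖Bop n t ht ν θ * Gop n t pauliZ (ν, τ) * UUop n t ht ν φ h‖ ≤ 1 + |Real.cos θ| := by
  calc ‖Bop n t ht ν θ * Gop n t pauliZ (ν, τ) * UUop n t ht ν φ h‖
      ≤ ‖Bop n t ht ν θ * Gop n t pauliZ (ν, τ)‖ * ‖UUop n t ht ν φ h‖ :=
        Matrix.l2_opNorm_mul _ _
    _ ≤ ‖Bop n t ht ν θ * Gop n t pauliZ (ν, τ)‖ :=
        mul_le_of_le_one_right (norm_nonneg _) (UUop_norm_le n t ht ν φ h)
    _ ≤ ‖Bop n t ht ν θ‖ * ‖Gop n t pauliZ (ν, τ)‖ := Matrix.l2_opNorm_mul _ _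
    _ ≤ ‖Bop n t ht ν θ‖ :=
        mul_le_of_le_one_right (norm_nonneg _) (Gop_norm_le n t (ν, τ))
    _ ≤ 1 + |Real.cos θ| := Bop_norm_le n t ht ν θ

lemma abs_eigenvalue_Tmat_le_aux (n t : ℕ) (hn : 1 ≤ n) (ht : 0 < t) (θ φ h : ℝ) (lam : ℂ)
    (hlam : ∃ v : HIdx n t × HIdx n t → ℂ, v ≠ 0 ∧ (Tmat n t ht θ φ h).mulVec v = lam • v) :
    ‖lam‖ ≤ (1 + |Real.cos θ|) ^ n := by
  classical
  obtain ⟨v, hv0, hvev⟩ := hlam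
  have hT : ‖Tmat n t ht θ φ h‖ ≤ (1 + |Real.cos θ|) ^ n := by
    unfold Tmat
    refine le_trans (norm_list_prod_le (1 + |Real.cos θ|) _ ?_) ?_
    · intro A hA
      rw [List.mem_ofFn] at hA
      obtain ⟨ν, rfl⟩ := hA
      exact factor_norm_le n t ht ν θ φ h _
    · rw [List.length_ofFn]
  set x : EuclideanSpace ℂ (HIdx n t × HIdx n t) :=
    (WithLp.equiv 2 (HIdx n t × HIdx n t → ℂ)).symm v with hxdef
  have hxn : 0 < ‖x‖ := by
    rw [norm_pos_iff]
    intro hx0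
    exact hv0 (congrArg WithLp.ofLp hx0)
  have h0 := Matrix.l2_opNorm_mulVec (Tmat n t ht θ φ h) x
  have hc2 : Tmat n t ht θ φ h *ᵥ x = lam • v := hvev
  rw [hc2] at h0
  have h1 : ((EuclideanSpace.equiv (HIdx n t × HIdx n t) ℂ).symm (lam • v) :
      EuclideanSpace ℂ (HIdx n t × HIdx n t)) = lam • x := rfl
  rw [h1, norm_smul] at h0
  have h2 : ‖lam‖ ≤ ‖Tmat n t ht θ φ h‖ :=
    le_of_mul_le_mul_right (by exact h0) hxn
  exact le_trans h2 hT

end Aux5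

/-- **Bound on the eigenvalues of the transfer matrix.** For all `n, t ≥ 1` and all real
`θ, φ, h`, every eigenvalue `λ` of `T_{θ,φ}[h]` satisfies `|λ| ≤ (1 + |cos θ|)^n`. -/
theorem abs_eigenvalue_Tmat_le (n t : ℕ) (hn : 1 ≤ n) (ht : 0 < t) (θ φ h : ℝ) (lam : ℂ)
    (hlam : ∃ v : HIdx n t × HIdx n t → ℂ, v ≠ 0 ∧ (Tmat n t ht θ φ h).mulVec v = lam • v) :
    ‖lam‖ ≤ (1 + |Real.cos θ|) ^ n := by
  exact abs_eigenvalue_Tmat_le_aux n t hn ht θ φ h lam hlam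
end
end

section
/- Let T be a square complex matrix and λ an eigenvalue of T such that |λ| = ‖T‖, the operator norm of T induced by the Euclidean norm. Then the algebraic multiplicity of λ equals its geometric multiplicity; equivalently, ker((T − λ·1)²) = ker(T − λ·1), i.e. λ has only trivial Jordan blocks. -/
/-!
STATEMENT 3: an eigenvalue of a complex matrix whose modulus equals the ℓ²→ℓ² operator
norm has trivial Jordan blocks: algebraic multiplicity = geometric multiplicity,
equivalently ker((T−λ)²) = ker(T−λ).
-/

noncomputable section
open Matrix Polynomial

/-- Abstract analytic lemma: if `g x = λ x + y`, `g y = λ y`, `‖g‖ = |λ|`, then `y = 0`. -/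
lemma aux_jordan_norm {E : Type*} [NormedAddCommGroup E] [NormedSpace ℂ E]
    (g : E →L[ℂ] E) (lam : ℂ) (hnorm : ‖g‖ = ‖lam‖)
    (x y : E) (hgx : g x = lam • x + y) (hgy : g y = lam • y) : y = 0 := by
  by_contra hy
  rcases eq_or_ne lam 0 with h0 | h0
  · -- then ‖g‖ = 0 so g = 0, but g x = y ≠ 0
    have : g = 0 := by
      rw [← norm_eq_zero, hnorm, h0, norm_zero]
    rw [this, h0] at hgx
    simp at hgx
    exact hy hgx.symm
  · have key : ∀ n : ℕ, (g ^ (n + 1)) x = lam ^ (n + 1) • x + ((n + 1 : ℕ) : ℂ) • lam ^ n • y := by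
      intro n
      induction n with
      | zero => simpa using hgx
      | succ n ih =>
        have hstep : (g ^ (n + 2)) x = g ((g ^ (n + 1)) x) := by
          rw [← ContinuousLinearMap.mul_apply, ← pow_succ']
        rw [hstep, ih, map_add, _root_.map_smul, _root_.map_smul, _root_.map_smul, hgx, hgy]
        push_cast
        module
    have hyl : 0 < ‖y‖ := norm_pos_iff.mpr hy
    have hl : 0 < ‖lam‖ := by
      exact norm_pos_iff.mpr h0
    have hbound : ∀ n : ℕ, ((n + 1 : ℕ) : ℝ) * ‖y‖ ≤ 2 * (‖lam‖ * ‖x‖) := by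
      intro n
      have hln : 0 < ‖lam‖ ^ n := pow_pos hl n
      have h1 : ‖(g ^ (n + 1)) x‖ ≤ ‖lam‖ ^ (n + 1) * ‖x‖ := by
        calc ‖(g ^ (n + 1)) x‖ ≤ ‖g ^ (n + 1)‖ * ‖x‖ := (g ^ (n + 1)).le_opNorm x
        _ ≤ ‖g‖ ^ (n + 1) * ‖x‖ := by
            gcongr
            exact norm_pow_le' g (Nat.succ_pos n)
        _ = ‖lam‖ ^ (n + 1) * ‖x‖ := by rw [hnorm]
      have heq : ((n + 1 : ℕ) : ℂ) • lam ^ n • y = (g ^ (n + 1)) x - lam ^ (n + 1) • x := by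
        rw [key n]; abel
      have h2 : ((n + 1 : ℕ) : ℝ) * (‖lam‖ ^ n * ‖y‖)
          ≤ ‖(g ^ (n + 1)) x‖ + ‖lam‖ ^ (n + 1) * ‖x‖ := by
        have hns := norm_sub_le ((g ^ (n + 1)) x) (lam ^ (n + 1) • x)
        rw [← heq] at hns
        have habs : ‖(n : ℂ) + 1‖ = (n : ℝ) + 1 := by
          rw [← Nat.cast_one (R := ℂ), ← Nat.cast_add, Complex.norm_natCast]
          push_cast
          ring
        simpa [norm_smul, habs] using hns
      have h3 : ((n + 1 : ℕ) : ℝ) * ‖lam‖ ^ n * ‖y‖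
          ≤ 2 * (‖lam‖ ^ (n + 1) * ‖x‖) := by nlinarith [h1, h2]
      rw [pow_succ'] at h3
      have h4 : ((n + 1 : ℕ) : ℝ) * ‖y‖ * ‖lam‖ ^ n
          ≤ 2 * (‖lam‖ * ‖x‖) * ‖lam‖ ^ n := by nlinarith [h3]
      exact le_of_mul_le_mul_right h4 hln
    obtain ⟨n, hn⟩ := exists_nat_gt (2 * (‖lam‖ * ‖x‖) / ‖y‖)
    have h' := hbound n
    have h'' : 2 * (‖lam‖ * ‖x‖) < (n : ℝ) * ‖y‖ := (div_lt_iff₀ hyl).mp hn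
    push_cast at h'
    nlinarith [h', h'', hyl]

/-- Shift of characteristic polynomial. -/
lemma aux_charpoly_shift (d : ℕ) (M : Matrix (Fin d) (Fin d) ℂ) (lam : ℂ) :
    (M - lam • 1).charpoly = M.charpoly.comp (X + C lam) := by
  let σ : ℂ[X] →+* ℂ[X] := (aeval (X + C lam : ℂ[X])).toRingHom
  have hσ : ∀ p : ℂ[X], σ p = p.comp (X + C lam) := fun p => by
    simp [σ, aeval_def, eval₂_eq_eval_map, Polynomial.comp]
  rw [← hσ]
  rw [Matrix.charpoly, Matrix.charpoly, RingHom.map_det]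
  congr 1
  ext i j
  by_cases h : i = j
  · subst h
    simp [charmatrix_apply_eq, σ, Matrix.sub_apply, Matrix.smul_apply, Matrix.one_apply, mul_comm]
    ring
  · simp [charmatrix_apply_ne _ _ _ h, σ, Matrix.sub_apply, Matrix.smul_apply, Matrix.one_apply, h]

/-- **Maximal-modulus eigenvalues have trivial Jordan blocks.** -/
theorem eigenvalue_of_max_modulus_semisimple (d : ℕ) (hd : 1 ≤ d)
    (T : Matrix (Fin d) (Fin d) ℂ) (lam : ℂ)
    (hlam : ∃ v : Fin d → ℂ, v ≠ 0 ∧ T.mulVec v = lam • v)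
    (hmax : ‖lam‖ = ‖Matrix.toEuclideanCLM (𝕜 := ℂ) T‖) :
    (T.charpoly.rootMultiplicity lam =
        Module.finrank ℂ (Module.End.eigenspace (Matrix.toLin' T) lam)) ∧
      LinearMap.ker (Matrix.toLin' ((T - lam • 1) * (T - lam • 1))) =
        LinearMap.ker (Matrix.toLin' (T - lam • 1)) := by
  -- the analytic key step
  set f : Module.End ℂ (Fin d → ℂ) := Matrix.toLin' (T - lam • 1) with hf
  have hfapp : ∀ v : Fin d → ℂ, f v = T.mulVec v - lam • v := by
    intro v
    simp [hf, Matrix.toLin'_apply, Matrix.sub_mulVec, Matrix.smul_mulVec,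
      Matrix.one_mulVec]
  have key : ∀ v : Fin d → ℂ, f (f v) = 0 → f v = 0 := by
    intro v hv
    -- move to Euclidean space
    let e := WithLp.linearEquiv 2 ℂ (Fin d → ℂ)
    let g := Matrix.toEuclideanCLM (𝕜 := ℂ) T
    have hge : ∀ w : Fin d → ℂ, g (e.symm w) = e.symm (T.mulVec w) := by
      intro w
      exact Matrix.toEuclideanCLM_toLp T w
    have hgx : g (e.symm v) = lam • (e.symm v) + e.symm (f v) := by
      rw [hge, hfapp]
      rw [← _root_.map_smul, ← map_add]
      congr 1
      abel
    have hgy : g (e.symm (f v)) = lam • (e.symm (f v)) := by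
      rw [hge]
      have hTfv : T.mulVec (f v) = lam • (f v) := by
        have h := hfapp (f v)
        rw [hv] at h
        exact sub_eq_zero.mp h.symm
      rw [hTfv]
      exact _root_.map_smul e.symm lam (f v)
    have := aux_jordan_norm g lam hmax.symm (e.symm v) (e.symm (f v)) hgx hgy
    have := e.symm.injective (a₁ := f v) (a₂ := 0) (by simpa using this)
    exact this
  -- part 2
  have part2 : LinearMap.ker (Matrix.toLin' ((T - lam • 1) * (T - lam • 1))) =
      LinearMap.ker (Matrix.toLin' (T - lam • 1)) := by
    rw [Matrix.toLin'_mul]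
    ext v
    simp only [LinearMap.mem_ker, LinearMap.comp_apply]
    constructor
    · intro h
      exact key v h
    · intro h
      rw [h, map_zero]
  refine ⟨?_, part2⟩
  -- kernels of powers stabilize
  have hker : ∀ n : ℕ, LinearMap.ker (f ^ (n + 1)) = LinearMap.ker f := by
    intro n
    induction n with
    | zero => simp
    | succ n ih =>
      ext v
      simp only [LinearMap.mem_ker]
      constructor
      · intro hv
        have h1 : (f ^ (n + 1)) (f v) = 0 := by
          rw [← Module.End.mul_apply, ← pow_succ]
          exact hv
        have h2 : f v ∈ LinearMap.ker (f ^ (n + 1)) := h1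
        rw [ih] at h2
        exact key v h2
      · intro hv
        rw [pow_succ, Module.End.mul_apply, hv, map_zero]
  -- the eigenspace is ker f
  have heig : Module.End.eigenspace (Matrix.toLin' T) lam = LinearMap.ker f := by
    ext v
    rw [Module.End.mem_eigenspace_iff, LinearMap.mem_ker, hfapp, sub_eq_zero,
      Matrix.toLin'_apply]
  -- generalized eigenspace at 0 of f is ker f
  have hgen : (Module.End.maxGenEigenspace f 0) = LinearMap.ker f := by
    have hV : Module.End.maxGenEigenspace f 0 = ⨆ (n : ℕ), LinearMap.ker (f ^ n) := by
      simp [← Module.End.iSup_genEigenspace_eq, Module.End.genEigenspace_nat]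
    rw [hV]
    apply le_antisymm
    · apply iSup_le
      intro n
      cases n with
      | zero =>
        rw [pow_zero, Module.End.one_eq_id, LinearMap.ker_id]
        exact bot_le
      | succ n => rw [hker n]
    · exact le_iSup_of_le 1 (by rw [pow_one])
  have hchar : f.charpoly = (T - lam • 1).charpoly := by
    rw [← LinearMap.charpoly_toMatrix f (Pi.basisFun ℂ (Fin d))]
    congr 1
    rw [LinearMap.toMatrix_eq_toMatrix', hf, LinearMap.toMatrix'_toLin']
  have hfr := LinearMap.finrank_maxGenEigenspace_zero_eq f
  rw [hgen, hchar, ← heig] at hfr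
  rw [Polynomial.rootMultiplicity_eq_natTrailingDegree, ← aux_charpoly_shift d T lam, ← hfr]
end
end

section
/- Fix integers n, t, N ≥ 1. Then ⟨Ψ| ∏_{ν=1}^{n}[ ∏_{τ=0}^{⌊N/2⌋−1}(G^z_{ν,t−τ}·G^x_{ν,t−τ}) · (G^z_{ν,t−⌊N/2⌋})^{N mod 2} ] |Ψ⟩ = 2^{(1−n)·min(2t,N)}, where G^a_{ν,τ} is the identity whenever τ ≤ 0. (Explicitly, the value is 2^{N(1−n)} when ⌊N/2⌋ < t and 2^{2t(1−n)} when ⌊N/2⌋ ≥ t.) -/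
noncomputable section
open Complex Matrix Finset
open scoped Kronecker

/-- `G^a_{ν,k}` with 1-based site label `k : ℕ`; the identity whenever `k ≤ 0` (in
particular for truncated subtraction `t - τ` with `τ ≥ t`). -/
def GopNat (n t : ℕ) (M : Matrix (Fin 2) (Fin 2) ℂ) (ν : Fin n) (k : ℕ) : DOp n t :=
  if hk : 1 ≤ k ∧ k ≤ t then Gop n t M (ν, ⟨k - 1, by omega⟩) else 1

namespace ProjAux

abbrev Mat4 := Matrix (Fin 2 × Fin 2) (Fin 2 × Fin 2) ℂ

def kron2 (M N : Matrix (Fin 2) (Fin 2) ℂ) : Mat4 :=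
  Matrix.of fun x y => M x.1 y.1 * N x.2 y.2

def gmat (M : Matrix (Fin 2) (Fin 2) ℂ) : Mat4 := (1/2 : ℂ) • (1 + kron2 M M)

variable {n t : ℕ}

def locExt (F : Fin n × Fin t → Mat4) : DOp n t :=
  Matrix.of fun x y => ∏ p, F p (x.1 p, x.2 p) (y.1 p, y.2 p)

lemma locExt_apply (F : Fin n × Fin t → Mat4) (x y) :
    locExt F x y = ∏ p, F p (x.1 p, x.2 p) (y.1 p, y.2 p) := rfl

-- single site lemmas
lemma site_kron_apply (M : Matrix (Fin 2) (Fin 2) ℂ) (p : Fin n × Fin t) (x y) :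
    (site M p ⊗ₖ site M p) x y
      = ∏ q, (if q = p then kron2 M M else (1 : Mat4)) (x.1 q, x.2 q) (y.1 q, y.2 q) := by
  rw [Matrix.kronecker_apply]
  show (∏ q, if q = p then M (x.1 q) (y.1 q) else if x.1 q = y.1 q then (1:ℂ) else 0) *
      (∏ q, if q = p then M (x.2 q) (y.2 q) else if x.2 q = y.2 q then (1:ℂ) else 0) = _
  rw [← Finset.prod_mul_distrib]
  apply Finset.prod_congr rfl
  intro q _
  by_cases hq : q = p
  · simp [hq, kron2]
  · simp only [hq, if_false, Matrix.one_apply, Prod.mk.injEq]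
    by_cases h1 : x.1 q = y.1 q <;> by_cases h2 : x.2 q = y.2 q <;>
      simp [h1, h2]

lemma one_eq_prod (x y : HIdx n t × HIdx n t) :
    (1 : DOp n t) x y = ∏ q, (1 : Mat4) (x.1 q, x.2 q) (y.1 q, y.2 q) := by
  simp only [Matrix.one_apply, Prod.mk.injEq]
  rw [Fintype.prod_boole]
  congr 1
  simp only [eq_iff_iff]
  constructor
  · rintro rfl p; exact ⟨rfl, rfl⟩
  · intro h
    exact Prod.ext (funext fun p => (h p).1) (funext fun p => (h p).2)

lemma locExt_one : locExt (n := n) (t := t) (fun _ => 1) = 1 := by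
  ext x y
  rw [locExt_apply, one_eq_prod]

lemma Gop_eq (M : Matrix (Fin 2) (Fin 2) ℂ) (p : Fin n × Fin t) :
    Gop n t M p = locExt (fun q => if q = p then gmat M else 1) := by
  ext x y
  show ((1 / 2 : ℂ) • ((1 : DOp n t) + site M p ⊗ₖ site M p)) x y = _
  rw [Matrix.smul_apply, Matrix.add_apply, one_eq_prod, site_kron_apply, locExt_apply]
  rw [← Finset.mul_prod_erase univ
        (fun q => (1 : Mat4) (x.1 q, x.2 q) (y.1 q, y.2 q)) (Finset.mem_univ p),
      ← Finset.mul_prod_erase univ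
        (fun q => (if q = p then kron2 M M else 1) (x.1 q, x.2 q) (y.1 q, y.2 q))
        (Finset.mem_univ p),
      ← Finset.mul_prod_erase univ
        (fun q => (if q = p then gmat M else 1) (x.1 q, x.2 q) (y.1 q, y.2 q))
        (Finset.mem_univ p)]
  have herase : ∀ (A : Mat4),
      (∏ q ∈ univ.erase p, (if q = p then A else 1) (x.1 q, x.2 q) (y.1 q, y.2 q))
        = ∏ q ∈ univ.erase p, (1 : Mat4) (x.1 q, x.2 q) (y.1 q, y.2 q) := by
    intro A
    apply Finset.prod_congr rfl
    intro q hq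
    rw [if_neg (Finset.ne_of_mem_erase hq)]
  rw [herase, herase]
  simp only [if_pos rfl, if_true, eq_self_iff_true, gmat, Matrix.smul_apply, Matrix.add_apply, smul_eq_mul]
  ring

def GN (M : Matrix (Fin 2) (Fin 2) ℂ) (ν : Fin n) (k : ℕ) : Fin n × Fin t → Mat4 :=
  fun q => if 1 ≤ k ∧ q.1 = ν ∧ (q.2 : ℕ) + 1 = k then gmat M else 1

lemma GopNat_eq (M : Matrix (Fin 2) (Fin 2) ℂ) (ν : Fin n) (k : ℕ) :
    GopNat n t M ν k = locExt (GN M ν k) := by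
  unfold GopNat
  split_ifs with hk
  · rw [Gop_eq]
    have hF : (fun q : Fin n × Fin t => if q = (ν, (⟨k - 1, by omega⟩ : Fin t)) then gmat M else 1)
        = GN (n := n) (t := t) M ν k := by
      funext q
      have hiff : q = (ν, (⟨k - 1, by omega⟩ : Fin t))
          ↔ (1 ≤ k ∧ q.1 = ν ∧ (q.2 : ℕ) + 1 = k) := by
        constructor
        · rintro rfl
          refine ⟨hk.1, rfl, ?_⟩
          show (k - 1) + 1 = k
          omega
        · rintro ⟨h1, h2, h3⟩
          refine Prod.ext h2 (Fin.ext ?_)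
          show (q.2 : ℕ) = k - 1
          omega
      unfold GN
      rw [if_congr hiff rfl rfl]
    rw [hF]
  · have hF : GN (n := n) (t := t) M ν k = fun _ => 1 := by
      funext q
      unfold GN
      rw [if_neg]
      rintro ⟨h1, h2, h3⟩
      exact hk ⟨h1, by omega⟩
    rw [hF, locExt_one]


lemma locExt_mul (F G : Fin n × Fin t → Mat4) :
    locExt F * locExt G = locExt (fun p => F p * G p) := by
  ext x y
  rw [Matrix.mul_apply, locExt_apply]
  have key : ∀ z : (((Fin n × Fin t) → Fin 2)) × ((Fin n × Fin t) → Fin 2),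
      locExt F x z * locExt G z y
      = ∏ p, (F p (x.1 p, x.2 p) (z.1 p, z.2 p) * G p (z.1 p, z.2 p) (y.1 p, y.2 p)) := by
    intro z
    rw [locExt_apply, locExt_apply, Finset.prod_mul_distrib]
  simp_rw [key]
  rw [← Equiv.sum_comp (Equiv.arrowProdEquivProdArrow (Fin n × Fin t) (fun _ => Fin 2) (fun _ => Fin 2))
    (fun z => ∏ p, (F p (x.1 p, x.2 p) (z.1 p, z.2 p) * G p (z.1 p, z.2 p) (y.1 p, y.2 p)))]
  simp only [Equiv.arrowProdEquivProdArrow, Equiv.coe_fn_mk, Prod.mk.eta]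
  rw [← Fintype.prod_sum (fun p c => F p (x.1 p, x.2 p) c * G p c (y.1 p, y.2 p))]
  simp [locExt_apply, Matrix.mul_apply]

lemma locExt_list {m : ℕ} (F : Fin m → Fin n × Fin t → Mat4) :
    (List.ofFn (fun i => locExt (F i))).prod
      = locExt (fun p => (List.ofFn (fun i => F i p)).prod) := by
  induction m with
  | zero => simp [locExt_one]
  | succ m ih =>
      rw [List.ofFn_succ, List.prod_cons, ih (fun i => F i.succ), locExt_mul]
      simp [List.ofFn_succ, List.prod_cons]

lemma list_prod_eq_single {M : Type*} [Monoid M] {m : ℕ} (f : Fin m → M) (i0 : Fin m)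
    (h : ∀ i, i ≠ i0 → f i = 1) : (List.ofFn f).prod = f i0 := by
  induction m with
  | zero => exact absurd i0.2 (by omega)
  | succ m ih =>
      rw [List.ofFn_succ, List.prod_cons]
      rcases Fin.eq_zero_or_eq_succ i0 with h0 | ⟨j, rfl⟩
      · subst h0
        have : (List.ofFn (fun i : Fin m => f i.succ)).prod = 1 := by
          apply List.prod_eq_one
          intro a ha
          rw [List.mem_ofFn] at ha
          obtain ⟨i, rfl⟩ := ha
          exact h i.succ (Fin.succ_ne_zero i)
        rw [this, mul_one]
      · rw [h 0 (Ne.symm (Fin.succ_ne_zero j)), one_mul]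
        exact ih (fun i => f i.succ) j (fun i hi => h i.succ (by simpa using hi))

lemma list_prod_eq_one {M : Type*} [Monoid M] {m : ℕ} (f : Fin m → M)
    (h : ∀ i, f i = 1) : (List.ofFn f).prod = 1 := by
  apply List.prod_eq_one
  intro a ha
  rw [List.mem_ofFn] at ha
  obtain ⟨i, rfl⟩ := ha
  exact h i


def Arow (N t : ℕ) (j : Fin t) : Mat4 :=
  if t < (j : ℕ) + 1 + N / 2 then gmat pauliZ * gmat pauliX
  else if N % 2 = 1 ∧ (j : ℕ) + 1 + N / 2 = t then gmat pauliZ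
  else 1

lemma pointwise_row (ν : Fin n) (N : ℕ) (q : Fin n × Fin t) :
    (List.ofFn (fun τ : Fin (N / 2) =>
        GN pauliZ ν (t - (τ : ℕ)) q * GN pauliX ν (t - (τ : ℕ)) q)).prod
      * (GN pauliZ ν (t - N / 2) q) ^ (N % 2)
    = if q.1 = ν then Arow N t q.2 else 1 := by
  by_cases hv : q.1 = ν
  · rw [if_pos hv]
    have hj : (q.2 : ℕ) < t := q.2.2
    by_cases h1 : t < (q.2 : ℕ) + 1 + N / 2
    · have hτ0 : t - 1 - (q.2 : ℕ) < N / 2 := by omega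
      obtain ⟨i0, hi0⟩ : ∃ i0 : Fin (N / 2), (i0 : ℕ) = t - 1 - (q.2 : ℕ) := ⟨⟨_, hτ0⟩, rfl⟩
      have hlist : (List.ofFn (fun τ : Fin (N / 2) =>
          GN pauliZ ν (t - (τ : ℕ)) q * GN pauliX ν (t - (τ : ℕ)) q)).prod
          = gmat pauliZ * gmat pauliX := by
        rw [list_prod_eq_single _ i0]
        · unfold GN
          rw [if_pos ⟨by omega, hv, by omega⟩, if_pos ⟨by omega, hv, by omega⟩]
        · intro i hi
          have hiv : (i : ℕ) ≠ (i0 : ℕ) := fun h => hi (Fin.ext h)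
          have hi2 : (i : ℕ) < N / 2 := i.2
          unfold GN
          rw [if_neg (by rintro ⟨a, b, c⟩; omega), if_neg (by rintro ⟨a, b, c⟩; omega),
            one_mul]
      have hpow : GN pauliZ ν (t - N / 2) q = 1 := by
        unfold GN
        rw [if_neg (by rintro ⟨a, b, c⟩; omega)]
      rw [hlist, hpow, one_pow, mul_one, Arow, if_pos h1]
    · by_cases h2 : N % 2 = 1 ∧ (q.2 : ℕ) + 1 + N / 2 = t
      · have hlist : (List.ofFn (fun τ : Fin (N / 2) =>
            GN pauliZ ν (t - (τ : ℕ)) q * GN pauliX ν (t - (τ : ℕ)) q)).prod = 1 := by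
          apply list_prod_eq_one
          intro i
          have hi2 : (i : ℕ) < N / 2 := i.2
          unfold GN
          rw [if_neg (by rintro ⟨a, b, c⟩; omega), if_neg (by rintro ⟨a, b, c⟩; omega),
            one_mul]
        have hpow : GN pauliZ ν (t - N / 2) q = gmat pauliZ := by
          unfold GN
          rw [if_pos ⟨by omega, hv, by omega⟩]
        rw [hlist, hpow, h2.1, pow_one, one_mul, Arow, if_neg h1, if_pos h2]
      · have hlist : (List.ofFn (fun τ : Fin (N / 2) =>
            GN pauliZ ν (t - (τ : ℕ)) q * GN pauliX ν (t - (τ : ℕ)) q)).prod = 1 := by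
          apply list_prod_eq_one
          intro i
          have hi2 : (i : ℕ) < N / 2 := i.2
          unfold GN
          rw [if_neg (by rintro ⟨a, b, c⟩; omega), if_neg (by rintro ⟨a, b, c⟩; omega),
            one_mul]
        have hpow : (GN pauliZ ν (t - N / 2) q) ^ (N % 2) = 1 := by
          rcases Nat.mod_two_eq_zero_or_one N with h | h
          · rw [h, pow_zero]
          · have hbase : GN (n := n) (t := t) pauliZ ν (t - N / 2) q = 1 := by
              unfold GN
              rw [if_neg]
              rintro ⟨a, b, c⟩
              exact h2 ⟨h, by omega⟩
            rw [hbase, one_pow]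
        rw [hlist, hpow, one_mul, Arow, if_neg h1, if_neg h2]
  · have hlist : (List.ofFn (fun τ : Fin (N / 2) =>
        GN pauliZ ν (t - (τ : ℕ)) q * GN pauliX ν (t - (τ : ℕ)) q)).prod = 1 := by
      apply list_prod_eq_one
      intro i
      unfold GN
      rw [if_neg (by rintro ⟨a, b, c⟩; exact hv b), if_neg (by rintro ⟨a, b, c⟩; exact hv b),
        one_mul]
    have hpow : (GN pauliZ ν (t - N / 2) q) ^ (N % 2) = 1 := by
      have hbase : GN (n := n) (t := t) pauliZ ν (t - N / 2) q = 1 := by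
        unfold GN
        rw [if_neg (by rintro ⟨a, b, c⟩; exact hv b)]
      rw [hbase, one_pow]
    rw [hlist, hpow, one_mul, if_neg hv]

lemma factor_eq (ν : Fin n) (N : ℕ) :
    (List.ofFn (fun τ : Fin (N / 2) =>
        GopNat n t pauliZ ν (t - (τ : ℕ)) * GopNat n t pauliX ν (t - (τ : ℕ)))).prod *
      (GopNat n t pauliZ ν (t - N / 2)) ^ (N % 2)
    = locExt (fun q => if q.1 = ν then Arow N t q.2 else 1) := by
  have hel : ∀ τ : Fin (N / 2),
      GopNat n t pauliZ ν (t - (τ : ℕ)) * GopNat n t pauliX ν (t - (τ : ℕ))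
        = locExt (fun q => GN pauliZ ν (t - (τ : ℕ)) q * GN pauliX ν (t - (τ : ℕ)) q) := by
    intro τ
    rw [GopNat_eq, GopNat_eq, locExt_mul]
  simp_rw [hel]
  rw [locExt_list, GopNat_eq]
  have hpow : ∀ (F : Fin n × Fin t → Mat4) (m : ℕ),
      (locExt F) ^ m = locExt (fun q => (F q) ^ m) := by
    intro F m
    induction m with
    | zero => simp [locExt_one]
    | succ m ih => rw [pow_succ, ih, locExt_mul]; simp [pow_succ]
  rw [hpow, locExt_mul]
  have hfun : (fun p : Fin n × Fin t =>
      (List.ofFn (fun i : Fin (N / 2) => GN pauliZ ν (t - (i : ℕ)) p * GN pauliX ν (t - (i : ℕ)) p)).prod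
        * (GN pauliZ ν (t - N / 2) p) ^ (N % 2))
      = fun q => if q.1 = ν then Arow N t q.2 else 1 :=
    funext fun q => pointwise_row ν N q
  rw [hfun]

lemma big_op_eq (N : ℕ) :
    (List.ofFn (fun ν : Fin n =>
        (List.ofFn (fun τ : Fin (N / 2) =>
          GopNat n t pauliZ ν (t - (τ : ℕ)) * GopNat n t pauliX ν (t - (τ : ℕ)))).prod *
          (GopNat n t pauliZ ν (t - N / 2)) ^ (N % 2))).prod
    = locExt (fun q => Arow N t q.2) := by
  simp_rw [factor_eq]
  rw [locExt_list]
  have hfun : (fun p : Fin n × Fin t =>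
      (List.ofFn (fun ν : Fin n => if p.1 = ν then Arow N t p.2 else 1)).prod)
      = fun q : Fin n × Fin t => Arow N t q.2 := by
    funext q
    rw [list_prod_eq_single _ q.1]
    · rw [if_pos rfl]
    · intro i hi
      rw [if_neg (fun h => hi h.symm)]
  rw [hfun]


def EZ : Mat4 := Matrix.of fun x y => if x = y ∧ x.1 = x.2 then 1 else 0
def EPhi : Mat4 := Matrix.of fun x y => if x.1 = x.2 ∧ y.1 = y.2 then (1/2 : ℂ) else 0

lemma gmatZ_eq : gmat pauliZ = EZ := by
  ext ⟨a, b⟩ ⟨c, d⟩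
  simp only [gmat, EZ, kron2, pauliZ, Matrix.smul_apply, Matrix.add_apply, Matrix.one_apply,
    Matrix.of_apply, smul_eq_mul, Prod.mk.injEq]
  fin_cases a <;> fin_cases b <;> fin_cases c <;> fin_cases d <;>
    norm_num [Matrix.cons_val_zero, Matrix.cons_val_one]

lemma gmatZX_eq : gmat pauliZ * gmat pauliX = EPhi := by
  ext ⟨a, b⟩ ⟨c, d⟩
  rw [Matrix.mul_apply]
  rw [Fintype.sum_prod_type]
  simp only [gmat, EPhi, kron2, pauliZ, pauliX, Matrix.smul_apply, Matrix.add_apply,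
    Matrix.one_apply, Matrix.of_apply, smul_eq_mul, Prod.mk.injEq, Fin.sum_univ_two]
  fin_cases a <;> fin_cases b <;> fin_cases c <;> fin_cases d <;>
    norm_num [Matrix.cons_val_zero, Matrix.cons_val_one]

def rowsum (n : ℕ) (A : Mat4) : ℂ :=
  ∑ u : Fin n → Fin 2, ∑ v : Fin n → Fin 2,
    ∏ ν, A (u (finRotate n ν), u ν) (v (finRotate n ν), v ν)

variable {n : ℕ}

lemma const_of_rot (hn : 1 ≤ n) (u : Fin n → Fin 2)
    (h : ∀ ν, u (finRotate n ν) = u ν) : ∀ ν, u ν = u ⟨0, hn⟩ := by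
  obtain ⟨m, rfl⟩ : ∃ m, n = m + 1 := ⟨n - 1, by omega⟩
  have key : ∀ k (hk : k < m + 1), u ⟨k, hk⟩ = u ⟨0, hn⟩ := by
    intro k
    induction k with
    | zero => intro hk; rfl
    | succ k ih =>
        intro hk
        have hk' : k < m + 1 := by omega
        have h1 := h ⟨k, hk'⟩
        rw [finRotate_succ_apply] at h1
        have h2 : ((⟨k, hk'⟩ : Fin (m + 1)) + 1) = ⟨k + 1, hk⟩ := by
          rw [Fin.ext_iff, Fin.val_add]
          simp
          omega
        rw [h2] at h1
        rw [h1]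
        exact ih hk'
  intro ν
  have := key ν.1 ν.2
  simpa using this

lemma sum_const_indicator (hn : 1 ≤ n) :
    ∑ u : Fin n → Fin 2, (if (∀ ν, u (finRotate n ν) = u ν) then (1 : ℂ) else 0) = 2 := by
  rw [Finset.sum_boole]
  have hfil : (univ.filter fun u : Fin n → Fin 2 => ∀ ν, u (finRotate n ν) = u ν)
      = {(fun _ => 0 : Fin n → Fin 2), (fun _ => 1 : Fin n → Fin 2)} := by
    ext u
    simp only [Finset.mem_filter, Finset.mem_univ, true_and, Finset.mem_insert,
      Finset.mem_singleton]
    constructor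
    · intro h
      have hc := const_of_rot hn u h
      obtain ⟨c0, hc0⟩ : ∃ c, u ⟨0, hn⟩ = c := ⟨_, rfl⟩
      fin_cases c0
      · left; funext ν; rw [hc ν, hc0]; rfl
      · right; funext ν; rw [hc ν, hc0]; rfl
    · rintro (rfl | rfl) <;> exact fun ν => rfl
  rw [hfil, Finset.card_insert_of_notMem, Finset.card_singleton]
  · norm_num
  · simp only [Finset.mem_singleton]
    intro h
    have := congrFun h ⟨0, hn⟩
    simp at this

lemma prod_ite_const {ι : Type} [Fintype ι] (p : ι → Prop) [DecidablePred p] (c : ℂ) :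
    (∏ i : ι, if p i then c else 0) = if ∀ i, p i then c ^ (Fintype.card ι) else 0 := by
  by_cases h : ∀ i, p i
  · rw [if_pos h, Finset.prod_congr rfl (fun i _ => if_pos (h i)), Finset.prod_const,
      Finset.card_univ]
  · rw [if_neg h]
    push_neg at h
    obtain ⟨i, hi⟩ := h
    exact Finset.prod_eq_zero (Finset.mem_univ i) (if_neg hi)

lemma boole_and (A B : Prop) [Decidable A] [Decidable B] (c : ℂ) :
    (if (A ∧ B) then c else 0) = (if A then (1:ℂ) else 0) * (if B then c else 0) := by
  by_cases hA : A <;> by_cases hB : B <;> simp [hA, hB]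

lemma rowsum_one : rowsum n 1 = 2 ^ n := by
  unfold rowsum
  have hsummand : ∀ u v : Fin n → Fin 2,
      (∏ ν, (1 : Mat4) (u (finRotate n ν), u ν) (v (finRotate n ν), v ν))
        = if u = v then (1 : ℂ) else 0 := by
    intro u v
    simp only [Matrix.one_apply, Prod.mk.injEq]
    rw [Fintype.prod_boole]
    congr 1
    simp only [eq_iff_iff]
    constructor
    · intro h; funext ν; exact (h ν).2
    · rintro rfl ν; exact ⟨rfl, rfl⟩
  simp_rw [hsummand]
  have hinner : ∀ u : Fin n → Fin 2, (∑ v, if u = v then (1 : ℂ) else 0) = 1 := by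
    intro u
    rw [Finset.sum_ite_eq]
    simp
  simp_rw [hinner]
  rw [Finset.sum_const, Finset.card_univ]
  simp [Fintype.card_fun]

lemma rowsum_EZ (hn : 1 ≤ n) : rowsum n EZ = 2 := by
  unfold rowsum
  have hsummand : ∀ u v : Fin n → Fin 2,
      (∏ ν, EZ (u (finRotate n ν), u ν) (v (finRotate n ν), v ν))
        = (if u = v then (1 : ℂ) else 0) *
          (if (∀ ν, u (finRotate n ν) = u ν) then (1 : ℂ) else 0) := by
    intro u v
    simp only [EZ, Matrix.of_apply, Prod.mk.injEq]
    rw [Fintype.prod_boole]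
    have hiff : (∀ ν, ((u (finRotate n ν) = v (finRotate n ν) ∧ u ν = v ν)
        ∧ u (finRotate n ν) = u ν))
        ↔ (u = v ∧ ∀ ν, u (finRotate n ν) = u ν) := by
      constructor
      · intro h
        exact ⟨funext fun ν => (h ν).1.2, fun ν => (h ν).2⟩
      · rintro ⟨rfl, h⟩ ν
        exact ⟨⟨rfl, rfl⟩, h ν⟩
    simp only [hiff]
    rw [boole_and]
  simp_rw [hsummand]
  have hinner : ∀ u : Fin n → Fin 2,
      (∑ v, (if u = v then (1 : ℂ) else 0) *
        (if (∀ ν, u (finRotate n ν) = u ν) then (1 : ℂ) else 0))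
      = (if (∀ ν, u (finRotate n ν) = u ν) then (1 : ℂ) else 0) := by
    intro u
    rw [← Finset.sum_mul]
    rw [Finset.sum_ite_eq]
    simp
  simp_rw [hinner]
  exact sum_const_indicator hn

lemma rowsum_EPhi (hn : 1 ≤ n) : rowsum n EPhi = 4 * (1 / 2 : ℂ) ^ n := by
  unfold rowsum
  have hsummand : ∀ u v : Fin n → Fin 2,
      (∏ ν, EPhi (u (finRotate n ν), u ν) (v (finRotate n ν), v ν))
        = (if (∀ ν, u (finRotate n ν) = u ν) then (1 : ℂ) else 0) *
          ((if (∀ ν, v (finRotate n ν) = v ν) then (1 : ℂ) else 0) * (1 / 2 : ℂ) ^ n) := by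
    intro u v
    simp only [EPhi, Matrix.of_apply]
    rw [prod_ite_const]
    have hiff : (∀ ν, (u (finRotate n ν) = u ν ∧ v (finRotate n ν) = v ν))
        ↔ ((∀ ν, u (finRotate n ν) = u ν) ∧ (∀ ν, v (finRotate n ν) = v ν)) :=
      forall_and
    simp only [hiff]
    rw [boole_and]
    congr 1
    by_cases h : ∀ ν, v (finRotate n ν) = v ν <;> simp [h, Fintype.card_fin]
  simp_rw [hsummand]
  have hinner : ∀ u : Fin n → Fin 2,
      (∑ v : Fin n → Fin 2, (if (∀ ν, u (finRotate n ν) = u ν) then (1 : ℂ) else 0) *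
        ((if (∀ ν, v (finRotate n ν) = v ν) then (1 : ℂ) else 0) * (1 / 2 : ℂ) ^ n))
      = (if (∀ ν, u (finRotate n ν) = u ν) then (1 : ℂ) else 0) * (2 * (1 / 2 : ℂ) ^ n) := by
    intro u
    rw [← Finset.mul_sum, ← Finset.sum_mul, sum_const_indicator hn]
  simp_rw [hinner]
  rw [← Finset.sum_mul, sum_const_indicator hn]
  ring


def cnorm (n t : ℕ) : ℂ := (((Real.sqrt 2 ^ (n * t) : ℝ) : ℂ))⁻¹

def rotc (s : HIdx n t) : HIdx n t := fun p => s (finRotate n p.1, p.2)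

lemma psiVec_apply (x : HIdx n t × HIdx n t) :
    PsiVec n t x = if x.1 = rotc x.2 then cnorm n t else 0 := by
  have h0 : PsiVec n t x = ∑ y : HIdx n t × HIdx n t,
      star (Pop n t y x) * oneVec n t y := by
    simp [PsiVec, Matrix.mulVec, dotProduct, Matrix.conjTranspose_apply]
  rw [h0, Fintype.sum_prod_type]
  have h1 : ∀ y1 y2 : HIdx n t,
      star (Pop n t (y1, y2) x) * oneVec n t (y1, y2)
        = if y1 = y2 then star (Pop n t (y1, y1) x) * cnorm n t else 0 := by
    intro y1 y2
    unfold oneVec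
    by_cases h : y1 = y2
    · subst h; simp [cnorm]
    · simp [h]
  simp_rw [h1]
  have h2 : ∀ y1 : HIdx n t, (∑ y2, if y1 = y2 then star (Pop n t (y1, y1) x) * cnorm n t else 0)
      = star (Pop n t (y1, y1) x) * cnorm n t := by
    intro y1
    rw [Finset.sum_ite_eq]
    simp
  simp_rw [h2]
  have h3 : ∀ y1 : HIdx n t,
      star (Pop n t (y1, y1) x) * cnorm n t
        = if y1 = x.1 then star (permMat n t y1 x.2) * cnorm n t else 0 := by
    intro y1
    unfold Pop
    rw [Matrix.kronecker_apply]
    by_cases h : y1 = x.1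
    · rw [if_pos h, Matrix.one_apply, if_pos h]
      simp
    · rw [if_neg h, Matrix.one_apply, if_neg h]
      simp
  simp_rw [h3]
  rw [Finset.sum_ite_eq']
  simp only [Finset.mem_univ, if_true]
  unfold permMat rotc
  simp only [Matrix.of_apply]
  have hiff : (∀ p : Fin n × Fin t, x.1 p = x.2 (finRotate n p.1, p.2))
      ↔ x.1 = fun p => x.2 (finRotate n p.1, p.2) := funext_iff.symm
  by_cases h : x.1 = fun p => x.2 (finRotate n p.1, p.2)
  · rw [if_pos (hiff.mpr h), if_pos h]
    simp
  · rw [if_neg (fun hh => h (hiff.mp hh)), if_neg h]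
    simp

lemma psiVec_apply₂ (r s : HIdx n t) :
    PsiVec n t (r, s) = if r = rotc s then cnorm n t else 0 := psiVec_apply (r, s)

lemma star_psiVec : star (PsiVec n t) = PsiVec n t := by
  funext x
  rw [Pi.star_apply, psiVec_apply]
  split_ifs with h
  · unfold cnorm
    rw [star_inv₀, Complex.star_def, Complex.conj_ofReal]
  · exact star_zero _

def pairEquiv (n t : ℕ) :
    (Fin t → ((Fin n → Fin 2) × (Fin n → Fin 2))) ≃ (HIdx n t × HIdx n t) where
  toFun w := (fun p => (w p.2).1 p.1, fun p => (w p.2).2 p.1)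
  invFun z := fun j => (fun ν => z.1 (ν, j), fun ν => z.2 (ν, j))
  left_inv w := by funext j; exact Prod.ext rfl rfl
  right_inv z := by exact Prod.ext rfl rfl

set_option maxHeartbeats 2000000 in
lemma dot_formula (A : Fin t → Mat4) :
    dotProduct (star (PsiVec n t))
      ((locExt (fun q => A q.2)).mulVec (PsiVec n t))
    = (cnorm n t * cnorm n t) * ∏ j : Fin t,
        (∑ u : Fin n → Fin 2, ∑ v : Fin n → Fin 2,
          ∏ ν, (A j) (u (finRotate n ν), u ν) (v (finRotate n ν), v ν)) := by
  rw [star_psiVec]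
  have h0 : dotProduct (PsiVec n t) ((locExt (fun q => A q.2)).mulVec (PsiVec n t))
      = ∑ x : HIdx n t × HIdx n t, ∑ y : HIdx n t × HIdx n t,
          PsiVec n t x * (locExt (fun q => A q.2) x y * PsiVec n t y) := by
    simp [dotProduct, Matrix.mulVec, Finset.mul_sum]
  rw [h0]
  rw [Fintype.sum_prod_type]
  have hF : ∀ x1 x2 : HIdx n t,
      (∑ y : HIdx n t × HIdx n t,
        PsiVec n t (x1, x2) * (locExt (fun q => A q.2) (x1, x2) y * PsiVec n t y))
      = if x1 = rotc x2 then
          (∑ y : HIdx n t × HIdx n t,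
            cnorm n t * (locExt (fun q => A q.2) (rotc x2, x2) y * PsiVec n t y))
        else 0 := by
    intro x1 x2
    by_cases h : x1 = rotc x2
    · rw [if_pos h]
      apply Finset.sum_congr rfl
      intro y _
      rw [psiVec_apply₂, if_pos h, h]
    · rw [if_neg h]
      apply Finset.sum_eq_zero
      intro y _
      rw [psiVec_apply₂, if_neg h, zero_mul]
  simp_rw [hF]
  rw [Finset.sum_comm]
  have hcol : ∀ x2 : HIdx n t,
      (∑ x1 : HIdx n t, if x1 = rotc x2 then
          (∑ y : HIdx n t × HIdx n t,
            cnorm n t * (locExt (fun q => A q.2) (rotc x2, x2) y * PsiVec n t y))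
        else 0)
      = ∑ y : HIdx n t × HIdx n t,
          cnorm n t * (locExt (fun q => A q.2) (rotc x2, x2) y * PsiVec n t y) := by
    intro x2
    rw [Finset.sum_ite_eq']
    simp
  simp_rw [hcol]
  have h4 : ∀ x2 : HIdx n t,
      (∑ y : HIdx n t × HIdx n t,
        cnorm n t * (locExt (fun q => A q.2) (rotc x2, x2) y * PsiVec n t y))
      = ∑ y2 : HIdx n t,
          cnorm n t * (locExt (fun q => A q.2) (rotc x2, x2) (rotc y2, y2) * cnorm n t) := by
    intro x2
    rw [Fintype.sum_prod_type]
    have hterm : ∀ y1 y2 : HIdx n t,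
        cnorm n t * (locExt (fun q => A q.2) (rotc x2, x2) (y1, y2) * PsiVec n t (y1, y2))
        = if y1 = rotc y2 then
            cnorm n t * (locExt (fun q => A q.2) (rotc x2, x2) (rotc y2, y2) * cnorm n t)
          else 0 := by
      intro y1 y2
      rw [psiVec_apply₂]
      by_cases h : y1 = rotc y2
      · rw [if_pos h, if_pos h, h]
      · rw [if_neg h, if_neg h, mul_zero, mul_zero]
    simp_rw [hterm]
    rw [Finset.sum_comm]
    apply Finset.sum_congr rfl
    intro y2 _
    rw [Finset.sum_ite_eq']
    simp
  simp_rw [h4]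
  have h5 : ∀ x2 y2 : HIdx n t,
      locExt (fun q => A q.2) (rotc x2, x2) (rotc y2, y2)
        = ∏ j : Fin t, ∏ ν : Fin n,
            (A j) (x2 (finRotate n ν, j), x2 (ν, j)) (y2 (finRotate n ν, j), y2 (ν, j)) := by
    intro x2 y2
    rw [locExt_apply, Fintype.prod_prod_type, Finset.prod_comm]
    rfl
  simp_rw [h5]
  have h6 : ∀ x2 y2 : HIdx n t,
      cnorm n t * ((∏ j : Fin t, ∏ ν : Fin n,
          (A j) (x2 (finRotate n ν, j), x2 (ν, j)) (y2 (finRotate n ν, j), y2 (ν, j)))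
        * cnorm n t)
      = (cnorm n t * cnorm n t) * ∏ j : Fin t, ∏ ν : Fin n,
          (A j) (x2 (finRotate n ν, j), x2 (ν, j)) (y2 (finRotate n ν, j), y2 (ν, j)) := by
    intro x2 y2
    ring
  simp_rw [h6, ← Finset.mul_sum]
  congr 1
  calc (∑ x2 : HIdx n t, ∑ y2 : HIdx n t, ∏ j : Fin t, ∏ ν : Fin n,
        (A j) (x2 (finRotate n ν, j), x2 (ν, j)) (y2 (finRotate n ν, j), y2 (ν, j)))
      = ∑ z : HIdx n t × HIdx n t, ∏ j : Fin t, ∏ ν : Fin n,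
          (A j) (z.1 (finRotate n ν, j), z.1 (ν, j)) (z.2 (finRotate n ν, j), z.2 (ν, j)) :=
        (Fintype.sum_prod_type (f := fun z : HIdx n t × HIdx n t =>
          ∏ j : Fin t, ∏ ν : Fin n,
            (A j) (z.1 (finRotate n ν, j), z.1 (ν, j))
              (z.2 (finRotate n ν, j), z.2 (ν, j)))).symm
    _ = ∑ w : Fin t → ((Fin n → Fin 2) × (Fin n → Fin 2)), ∏ j : Fin t, ∏ ν : Fin n,
          (A j) ((w j).1 (finRotate n ν), (w j).1 ν) ((w j).2 (finRotate n ν), (w j).2 ν) :=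
        (Equiv.sum_comp (pairEquiv n t) (fun z : HIdx n t × HIdx n t =>
          ∏ j : Fin t, ∏ ν : Fin n,
            (A j) (z.1 (finRotate n ν, j), z.1 (ν, j)) (z.2 (finRotate n ν, j), z.2 (ν, j)))).symm
    _ = ∏ j : Fin t, ∑ x : (Fin n → Fin 2) × (Fin n → Fin 2), ∏ ν : Fin n,
          (A j) (x.1 (finRotate n ν), x.1 ν) (x.2 (finRotate n ν), x.2 ν) :=
        (Fintype.prod_sum (fun (j : Fin t) (x : (Fin n → Fin 2) × (Fin n → Fin 2)) =>
          ∏ ν : Fin n, (A j) (x.1 (finRotate n ν), x.1 ν) (x.2 (finRotate n ν), x.2 ν))).symm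
    _ = ∏ j : Fin t, ∑ u : Fin n → Fin 2, ∑ v : Fin n → Fin 2, ∏ ν : Fin n,
          (A j) (u (finRotate n ν), u ν) (v (finRotate n ν), v ν) :=
        Finset.prod_congr rfl (fun j _ => Fintype.sum_prod_type
          (f := fun x : (Fin n → Fin 2) × (Fin n → Fin 2) =>
            ∏ ν : Fin n, (A j) (x.1 (finRotate n ν), x.1 ν) (x.2 (finRotate n ν), x.2 ν)))


lemma card_val_lt (t m : ℕ) :
    (univ.filter fun j : Fin t => (j : ℕ) < m).card = min m t := by
  have hle : min m t ≤ t := min_le_right m t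
  have hmap : (univ.filter fun j : Fin t => (j : ℕ) < m)
      = Finset.map (Fin.castLEEmb hle) univ := by
    ext j
    rw [Finset.mem_filter, Finset.mem_map]
    constructor
    · intro hj
      exact ⟨⟨(j : ℕ), by omega⟩, Finset.mem_univ _, Fin.ext rfl⟩
    · rintro ⟨i, -, rfl⟩
      refine ⟨Finset.mem_univ _, ?_⟩
      have := i.2
      simpa [Fin.castLEEmb] using by omega
  rw [hmap, Finset.card_map, Finset.card_univ, Fintype.card_fin]

lemma card_val_ge (t m : ℕ) :
    (univ.filter fun j : Fin t => m ≤ (j : ℕ)).card = t - min m t := by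
  have hcompl : (univ.filter fun j : Fin t => m ≤ (j : ℕ))
      = univ \ (univ.filter fun j : Fin t => (j : ℕ) < m) := by
    ext j
    simp only [Finset.mem_filter, Finset.mem_univ, true_and, Finset.mem_sdiff]
    omega
  rw [hcompl, Finset.card_sdiff_of_subset (Finset.filter_subset _ _), Finset.card_univ,
    Fintype.card_fin, card_val_lt]

lemma card1 (t N : ℕ) :
    (univ.filter fun j : Fin t => t < (j : ℕ) + 1 + N / 2).card = min (N / 2) t := by
  have h : (univ.filter fun j : Fin t => t < (j : ℕ) + 1 + N / 2)
      = univ.filter fun j : Fin t => (t - min (N / 2) t) ≤ (j : ℕ) := by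
    ext j
    have := j.2
    simp only [Finset.mem_filter, Finset.mem_univ, true_and]
    omega
  rw [h, card_val_ge]
  omega

lemma card2 (t N : ℕ) (ht : 0 < t) :
    (univ.filter fun j : Fin t => N % 2 = 1 ∧ (j : ℕ) + 1 + N / 2 = t).card
      = if N % 2 = 1 ∧ N / 2 < t then 1 else 0 := by
  by_cases h : N % 2 = 1 ∧ N / 2 < t
  · rw [if_pos h]
    have hfil : (univ.filter fun j : Fin t => N % 2 = 1 ∧ (j : ℕ) + 1 + N / 2 = t)
        = {(⟨t - 1 - N / 2, by omega⟩ : Fin t)} := by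
      ext j
      simp only [Finset.mem_filter, Finset.mem_univ, true_and, Finset.mem_singleton,
        Fin.ext_iff]
      have := j.2
      constructor
      · rintro ⟨h1, h2⟩
        show (j : ℕ) = t - 1 - N / 2
        omega
      · intro hj
        have hj' : (j : ℕ) = t - 1 - N / 2 := hj
        exact ⟨h.1, by omega⟩
    rw [hfil, Finset.card_singleton]
  · rw [if_neg h]
    rw [Finset.filter_false_of_mem, Finset.card_empty]
    intro j _
    rintro ⟨h1, h2⟩
    have := j.2
    rw [not_and] at h
    have := h h1
    omega


lemma prod_zpow_two {ι : Type} (s : Finset ι) (f : ι → ℤ) :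
    ∏ i ∈ s, (2 : ℂ) ^ (f i) = (2 : ℂ) ^ (∑ i ∈ s, f i) := by
  classical
  induction s using Finset.cons_induction with
  | empty => simp
  | cons a s ha ih =>
      rw [Finset.prod_cons, Finset.sum_cons, ih, ← zpow_add₀ (by norm_num : (2:ℂ) ≠ 0)]

end ProjAux

/-- **Evaluation of the projector matrix element:**
`⟨Ψ|∏_ν ∏_{τ=0}^{⌊N/2⌋−1}(G^z_{ν,t−τ}G^x_{ν,t−τ})·(G^z_{ν,t−⌊N/2⌋})^{N mod 2}|Ψ⟩
  = 2^{(1−n)·min(2t,N)}`. -/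
theorem projector_matrix_element (n t N : ℕ) (hn : 1 ≤ n) (ht : 0 < t) (hN : 1 ≤ N) :
    dotProduct (star (PsiVec n t))
        (((List.ofFn (fun ν : Fin n =>
            (List.ofFn (fun τ : Fin (N / 2) =>
              GopNat n t pauliZ ν (t - (τ : ℕ)) * GopNat n t pauliX ν (t - (τ : ℕ)))).prod *
              (GopNat n t pauliZ ν (t - N / 2)) ^ (N % 2))).prod).mulVec (PsiVec n t)) =
      (2 : ℂ) ^ (((1 : ℤ) - (n : ℤ)) * min (2 * (t : ℤ)) (N : ℤ)) := by
  rw [ProjAux.big_op_eq, ProjAux.dot_formula (ProjAux.Arow N t)]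
  have hrow : ∀ j : Fin t,
      (∑ u : Fin n → Fin 2, ∑ v : Fin n → Fin 2,
        ∏ ν, (ProjAux.Arow N t j) (u (finRotate n ν), u ν) (v (finRotate n ν), v ν))
      = (2 : ℂ) ^ (if t < (j : ℕ) + 1 + N / 2 then 2 - (n : ℤ)
          else if N % 2 = 1 ∧ (j : ℕ) + 1 + N / 2 = t then 1 else (n : ℤ)) := by
    intro j
    show ProjAux.rowsum n (ProjAux.Arow N t j) = _
    unfold ProjAux.Arow
    by_cases h1 : t < (j : ℕ) + 1 + N / 2
    · rw [if_pos h1, if_pos h1, ProjAux.gmatZX_eq, ProjAux.rowsum_EPhi hn]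
      rw [zpow_sub₀ (by norm_num : (2:ℂ) ≠ 0), zpow_natCast]
      rw [one_div, inv_pow]
      norm_num
      rw [div_eq_mul_inv]
    · by_cases h2 : N % 2 = 1 ∧ (j : ℕ) + 1 + N / 2 = t
      · rw [if_neg h1, if_pos h2, if_neg h1, if_pos h2, ProjAux.gmatZ_eq,
          ProjAux.rowsum_EZ hn, zpow_one]
      · rw [if_neg h1, if_neg h2, if_neg h1, if_neg h2, ProjAux.rowsum_one, zpow_natCast]
  simp_rw [hrow]
  rw [ProjAux.prod_zpow_two]
  have hcc : ProjAux.cnorm n t * ProjAux.cnorm n t = (2 : ℂ) ^ (-((n * t : ℕ) : ℤ)) := by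
    unfold ProjAux.cnorm
    rw [← mul_inv, ← Complex.ofReal_mul, ← sq, ← pow_mul, mul_comm (n * t) 2, pow_mul,
      Real.sq_sqrt (by norm_num : (0:ℝ) ≤ 2)]
    rw [_root_.zpow_neg, zpow_natCast]
    congr 1
    push_cast
    ring
  rw [hcc, ← zpow_add₀ (by norm_num : (2:ℂ) ≠ 0)]
  congr 1
  have hsplit : ∀ j : Fin t,
      (if t < (j : ℕ) + 1 + N / 2 then 2 - (n : ℤ)
        else if N % 2 = 1 ∧ (j : ℕ) + 1 + N / 2 = t then 1 else (n : ℤ))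
      = (n : ℤ) + (if t < (j : ℕ) + 1 + N / 2 then 2 - 2 * (n : ℤ) else 0)
          + (if N % 2 = 1 ∧ (j : ℕ) + 1 + N / 2 = t then 1 - (n : ℤ) else 0) := by
    intro j
    split_ifs with h1 h2 h2 <;> omega
  simp_rw [hsplit]
  rw [Finset.sum_add_distrib, Finset.sum_add_distrib, Finset.sum_const,
    Finset.card_univ, Fintype.card_fin]
  rw [Finset.sum_ite, Finset.sum_const, Finset.sum_const_zero, add_zero]
  rw [Finset.sum_ite, Finset.sum_const, Finset.sum_const_zero, add_zero]
  rw [ProjAux.card1, ProjAux.card2 t N ht]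
  simp only [nsmul_eq_mul, smul_eq_mul]
  rcases Nat.lt_or_ge (N / 2) t with hq | hq
  · rw [min_eq_left hq.le,
      (show min (2 * (t : ℤ)) (N : ℤ) = (N : ℤ) from min_eq_right (by omega))]
    rcases Nat.mod_two_eq_zero_or_one N with h | h
    · rw [if_neg (by omega : ¬(N % 2 = 1 ∧ N / 2 < t))]
      have hN2 : (N : ℤ) = 2 * ((N / 2 : ℕ) : ℤ) := by omega
      rw [hN2, Nat.cast_mul]
      push_cast
      ring
    · rw [if_pos ⟨h, hq⟩]
      have hN2 : (N : ℤ) = 2 * ((N / 2 : ℕ) : ℤ) + 1 := by omega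
      rw [hN2, Nat.cast_mul]
      push_cast
      ring
  · rw [min_eq_right hq,
      (show min (2 * (t : ℤ)) (N : ℤ) = 2 * (t : ℤ) from min_eq_left (by omega)),
      if_neg (by omega : ¬(N % 2 = 1 ∧ N / 2 < t))]
    rw [Nat.cast_mul]
    push_cast
    ring
end
end

section
/- For every integer L ≥ 1 and every choice of signs s_1,…,s_L ∈ {−1,+1}, the 2×2 matrix trace satisfies |Tr( ∏_{j=1}^{L} ½(1 + s_j σ^z)·exp(i(π/4)σ^x) )| = 2^{−L/2}, where the product is the ordered matrix product with j increasing from left to right. -/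
/-!
STATEMENT 18: for any signs s_1,…,s_L ∈ {−1,+1},
|Tr(∏_{j=1}^{L} ½(1 + s_j σ^z)·exp(i(π/4)σ^x))| = 2^{−L/2}.
-/

noncomputable section
open Complex Matrix

/- Auxiliary material -/

lemma diag_eq (c d : ℂ) : diagonal ![c, d] = !![c,0;0,d] := by
  ext i j; fin_cases i <;> fin_cases j <;> simp [diagonal]

lemma Pinv : (!![1,1;1,-1] : Matrix (Fin 2) (Fin 2) ℂ)⁻¹ = (2:ℂ)⁻¹ • !![1,1;1,-1] := by
  rw [Matrix.inv_def, Matrix.det_fin_two_of, Matrix.adjugate_fin_two_of]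
  ext i j; fin_cases i <;> fin_cases j <;>
    simp [Ring.inverse_eq_inv] <;> norm_num

lemma conj_decomp (c : ℂ) : c • pauliX =
    !![1,1;1,-1] * diagonal ![c, -c] * (!![1,1;1,-1] : Matrix (Fin 2) (Fin 2) ℂ)⁻¹ := by
  rw [Pinv, diag_eq]
  ext i j; fin_cases i <;> fin_cases j <;>
    simp [pauliX, Matrix.mul_apply, Fin.sum_univ_two] <;> ring

lemma exp_smul_pauliX (c : ℂ) : NormedSpace.exp (c • pauliX) =
    !![1,1;1,-1] * diagonal ![Complex.exp c, Complex.exp (-c)] *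
      (!![1,1;1,-1] : Matrix (Fin 2) (Fin 2) ℂ)⁻¹ := by
  rw [conj_decomp]
  rw [Matrix.exp_conj _ _ (by rw [Matrix.isUnit_iff_isUnit_det, Matrix.det_fin_two_of]; norm_num)]
  have : NormedSpace.exp ![c, -c] = ![Complex.exp c, Complex.exp (-c)] := by
    funext i
    rw [Pi.coe_exp, ← Complex.exp_eq_exp_ℂ]
    fin_cases i <;> simp
  rw [Matrix.exp_diagonal, this]

lemma sqrt2_cast : ((Real.sqrt 2 : ℝ) : ℂ) * ((Real.sqrt 2 : ℝ) : ℂ) = 2 := by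
  rw [← Complex.ofReal_mul, Real.mul_self_sqrt (by norm_num)]; norm_num

lemma expU : NormedSpace.exp (Complex.I • (((Real.pi / 4 : ℝ) : ℂ) • pauliX)) =
    ((Real.sqrt 2 : ℝ)⁻¹ : ℂ) • !![1, Complex.I; Complex.I, 1] := by
  rw [smul_smul, exp_smul_pauliX, Pinv, diag_eq]
  have hs2 : ((Real.sqrt 2 : ℝ) : ℂ) ≠ 0 := by
    intro h
    have := sqrt2_cast
    rw [h] at this; norm_num at this
  have he : Complex.exp (Complex.I * ((Real.pi / 4 : ℝ) : ℂ)) =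
      ((Real.sqrt 2 : ℝ)⁻¹ : ℂ) * (1 + Complex.I) := by
    rw [mul_comm, Complex.exp_mul_I, ← Complex.ofReal_cos, ← Complex.ofReal_sin,
      Real.cos_pi_div_four, Real.sin_pi_div_four]
    push_cast
    field_simp
    linear_combination (1 + Complex.I) * sqrt2_cast
  have he' : Complex.exp (-(Complex.I * ((Real.pi / 4 : ℝ) : ℂ))) =
      ((Real.sqrt 2 : ℝ)⁻¹ : ℂ) * (1 - Complex.I) := by
    rw [← neg_mul, neg_mul_comm, mul_comm, Complex.exp_mul_I, Complex.cos_neg, Complex.sin_neg,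
      ← Complex.ofReal_cos, ← Complex.ofReal_sin,
      Real.cos_pi_div_four, Real.sin_pi_div_four]
    field_simp
    push_cast
    linear_combination ((1 - Complex.I) / 2) * sqrt2_cast
  rw [he, he']
  ext i j
  fin_cases i <;> fin_cases j <;>
    simp [Matrix.mul_apply, Fin.sum_univ_two] <;>
    field_simp <;> ring_nf

def gM : ℝ → Matrix (Fin 2) (Fin 2) ℂ := fun t =>
  if t = 1 then !![1, Complex.I; 0, 0] else !![0, 0; Complex.I, 1]

def EM : ℝ → ℝ → Matrix (Fin 2) (Fin 2) ℂ := fun a b =>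
  if a = 1 then (if b = 1 then !![1, Complex.I; 0, 0] else !![Complex.I, 1; 0, 0])
  else (if b = 1 then !![0, 0; 1, Complex.I] else !![0, 0; Complex.I, 1])

lemma gE (t a b : ℝ) (ht : t = 1 ∨ t = -1) (ha : a = 1 ∨ a = -1) :
    gM t * EM a b = (if t = a then 1 else Complex.I) • EM t b := by
  rcases ht with rfl | rfl <;> rcases ha with rfl | rfl <;> by_cases hb : b = 1 <;>
    simp [gM, EM, hb] <;> norm_num <;>
    ext i <;> fin_cases i <;>
    simp [Matrix.mul_apply, Fin.sum_univ_two, Complex.I_mul_I]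

lemma gM_eq_EM (t : ℝ) : gM t = EM t t := by
  by_cases h : t = 1 <;> simp [gM, EM, h]

lemma prod_form : ∀ (l : List ℝ) (t : ℝ), (t = 1 ∨ t = -1) → (∀ x ∈ l, x = 1 ∨ x = -1) →
    ∃ (c : ℂ) (b : ℝ), ‖c‖ = 1 ∧ (b = 1 ∨ b = -1) ∧
      ((t :: l).map gM).prod = c • EM t b := by
  intro l
  induction l with
  | nil =>
    intro t ht _
    exact ⟨1, t, by simp, ht, by simp [gM_eq_EM]⟩
  | cons x l' ih =>
    intro t ht hmem
    obtain ⟨c, b, hc, hb, hprod⟩ := ih x (hmem x (by simp)) (fun y hy => hmem y (by simp [hy]))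
    refine ⟨(if t = x then 1 else Complex.I) * c, b, ?_, hb, ?_⟩
    · rw [norm_mul, hc, mul_one]
      by_cases h : t = x <;> simp [h]
    · have : ((t :: x :: l').map gM).prod = gM t * ((x :: l').map gM).prod := by simp
      rw [this, hprod, Matrix.mul_smul, gE t x b (by exact ht) (hmem x (by simp)), smul_smul,
        mul_comm c]

lemma abs_trace_EM (t b : ℝ) (ht : t = 1 ∨ t = -1) (hb : b = 1 ∨ b = -1) :
    ‖Matrix.trace (EM t b)‖ = 1 := by
  rcases ht with rfl | rfl <;> rcases hb with rfl | rfl <;>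
    norm_num [EM, Matrix.trace_fin_two]

lemma abs_trace_prod (l : List ℝ) (hl : ∀ x ∈ l, x = 1 ∨ x = -1) (hne : l ≠ []) :
    ‖Matrix.trace ((l.map gM).prod)‖ = 1 := by
  obtain ⟨t, l', rfl⟩ := List.exists_cons_of_ne_nil hne
  obtain ⟨c, b, hc, hb, hprod⟩ := prod_form l' t (hl t (by simp)) (fun y hy => hl y (by simp [hy]))
  rw [hprod, Matrix.trace_smul, smul_eq_mul, norm_mul, hc, one_mul,
    abs_trace_EM t b (hl t (by simp)) hb]

lemma factor_eq (t : ℝ) (ht : t = 1 ∨ t = -1) :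
    ((1 / 2 : ℂ) • (1 + ((t : ℝ) : ℂ) • pauliZ)) *
      (((Real.sqrt 2 : ℝ)⁻¹ : ℂ) • !![1, Complex.I; Complex.I, 1]) =
    ((Real.sqrt 2 : ℝ)⁻¹ : ℂ) • gM t := by
  rcases ht with rfl | rfl <;> norm_num [gM] <;>
  · ext i j
    fin_cases i <;> fin_cases j <;>
      simp [pauliZ, Matrix.mul_apply, Fin.sum_univ_two, Matrix.one_apply] <;> ring

lemma prod_smul_map (c : ℂ) : ∀ l : List ℝ,
    (l.map (fun t => c • gM t)).prod = c ^ l.length • (l.map gM).prod := by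
  intro l
  induction l with
  | nil => simp
  | cons x l' ih =>
    simp only [List.map_cons, List.prod_cons, ih, List.length_cons]
    rw [Matrix.smul_mul, Matrix.mul_smul, smul_smul, pow_succ, mul_comm]

/-- **Modulus of the trace of a product of `σ^z`-projectors and `x`-kicks.** -/
theorem abs_trace_projector_kick (L : ℕ) (hL : 1 ≤ L) (s : Fin L → ℝ)
    (hs : ∀ j, s j = 1 ∨ s j = -1) :
    ‖(Matrix.trace
      (List.ofFn (fun j : Fin L =>
        ((1 / 2 : ℂ) • (1 + ((s j : ℝ) : ℂ) • pauliZ)) *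
          NormedSpace.exp (Complex.I • (((Real.pi / 4 : ℝ) : ℂ) • pauliX)))).prod)‖ =
      (Real.sqrt 2 ^ L)⁻¹ := by
  have hfun : (fun j : Fin L =>
      ((1 / 2 : ℂ) • (1 + ((s j : ℝ) : ℂ) • pauliZ)) *
        NormedSpace.exp (Complex.I • (((Real.pi / 4 : ℝ) : ℂ) • pauliX))) =
      fun j : Fin L => (fun t : ℝ => ((Real.sqrt 2 : ℝ)⁻¹ : ℂ) • gM t) (s j) := by
    funext j
    rw [expU, factor_eq (s j) (hs j)]
  rw [hfun]
  rw [show (List.ofFn fun j => (fun t : ℝ => ((Real.sqrt 2 : ℝ)⁻¹ : ℂ) • gM t) (s j)) =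
      (List.ofFn s).map (fun t : ℝ => ((Real.sqrt 2 : ℝ)⁻¹ : ℂ) • gM t) by
    rw [List.map_ofFn]; rfl]
  rw [prod_smul_map, Matrix.trace_smul, smul_eq_mul, norm_mul,
    norm_pow, norm_inv, abs_trace_prod (List.ofFn s)
      (by intro x hx; obtain ⟨j, rfl⟩ := List.mem_ofFn.1 hx; exact hs j)
      (by simp [← List.length_eq_zero_iff]; omega),
    mul_one, Complex.norm_real, Real.norm_of_nonneg (by positivity), List.length_ofFn, inv_pow]
end
end
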